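/- Let G be a connected bipartite graph of order six or more with color classes A and B satisfying |A| = |B|. Then the following four statements are equivalent: (i) G is a brace; (ii) |N_G(Z)| ≥ |Z| + 2 for every nonempty subset Z of A with |Z| < |A| − 1; (iii) for any four distinct vertices a₁, a₂ ∈ A and b₁, b₂ ∈ B, the graph G − a₁ − a₂ − b₁ − b₂ has a perfect matching; (iv) G is 2-extendable, i.e., G has a matching of size two and every matching of size two extends to a perfect matching of G. -/

import Mathlib

namespace MinimalBraces

open SimpleGraph

/-- The degree of a vertex, via the cardinality of its neighbor set. -/
noncomputable def mdeg {V : Type*} (G : SimpleGraph V) (v : V) : ℕ :=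
  (G.neighborSet v).ncard

/-- `G` has a perfect matching. -/
def HasPerfectMatching {V : Type*} (G : SimpleGraph V) : Prop :=
  ∃ M : G.Subgraph, M.IsPerfectMatching

/-- A connected graph with at least one edge is matching covered if every edge
lies in some perfect matching. -/
def IsMatchingCovered {V : Type*} (G : SimpleGraph V) : Prop :=
  G.Connected ∧ G.edgeSet.Nonempty ∧
    ∀ e ∈ G.edgeSet, ∃ M : G.Subgraph, M.IsPerfectMatching ∧ e ∈ M.edgeSet

/-- `A`, `B` are the color classes of a bipartition of `G`. -/
def IsBipartition {V : Type*} (G : SimpleGraph V) (A B : Set V) : Prop :=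
  A ∪ B = Set.univ ∧ A ∩ B = ∅ ∧
    ∀ u v : V, G.Adj u v → (u ∈ A ∧ v ∈ B) ∨ (u ∈ B ∧ v ∈ A)

/-- `G` is bipartite (admits a bipartition into two color classes). -/
def IsBipartite' {V : Type*} (G : SimpleGraph V) : Prop :=
  ∃ A B : Set V, IsBipartition G A B

/-- The cut `∂(X)`: the set of edges of `G` with exactly one end in `X`. -/
def cutEdges {V : Type*} (G : SimpleGraph V) (X : Set V) : Set (Sym2 V) :=
  {e | e ∈ G.edgeSet ∧ ∃ u v : V, e = s(u, v) ∧ u ∈ X ∧ v ∉ X}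

/-- The cut `∂(X)` is tight: every perfect matching has exactly one edge in it. -/
def IsTightCut {V : Type*} (G : SimpleGraph V) (X : Set V) : Prop :=
  ∀ M : G.Subgraph, M.IsPerfectMatching → (M.edgeSet ∩ cutEdges G X).ncard = 1

/-- A shore is trivial if it or its complement is a singleton. -/
def IsTrivialShore {V : Type*} (X : Set V) : Prop :=
  (∃ v, X = ({v} : Set V)) ∨ (∃ v, Xᶜ = ({v} : Set V))

/-- A brace: a bipartite matching covered graph free of nontrivial tight cuts. -/
def IsBrace {V : Type*} (G : SimpleGraph V) : Prop :=
  IsBipartite' G ∧ IsMatchingCovered G ∧ ∀ X : Set V, IsTightCut G X → IsTrivialShore X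

/-- A minimal brace: deleting any edge results in a graph that is not a brace. -/
def IsMinimalBrace {V : Type*} (G : SimpleGraph V) : Prop :=
  IsBrace G ∧ ∀ e ∈ G.edgeSet, ¬ IsBrace (G.deleteEdges {e})

/-- The neighborhood of a set of vertices. -/
def setNbhd {V : Type*} (G : SimpleGraph V) (Z : Set V) : Set V :=
  {v | ∃ z ∈ Z, G.Adj z v}

/-- An edge of a (simple) brace is superfluous if deleting it leaves a brace. -/
def IsSuperfluous {V : Type*} (G : SimpleGraph V) (e : Sym2 V) : Prop :=
  e ∈ G.edgeSet ∧ IsBrace (G.deleteEdges {e})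

/-- A set of edges of `G` forming a matching. -/
def IsMatchingSet {V : Type*} (G : SimpleGraph V) (M : Set (Sym2 V)) : Prop :=
  M ⊆ G.edgeSet ∧ ∀ e₁ ∈ M, ∀ e₂ ∈ M, e₁ ≠ e₂ → ∀ v : V, ¬ (v ∈ e₁ ∧ v ∈ e₂)

/-- `G` is 2-extendable: it has a matching of size two, and every matching of
size two extends to a perfect matching. -/
def IsTwoExtendable {V : Type*} (G : SimpleGraph V) : Prop :=
  (∃ M : Set (Sym2 V), IsMatchingSet G M ∧ M.ncard = 2) ∧
  ∀ M : Set (Sym2 V), IsMatchingSet G M → M.ncard = 2 →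
    ∃ N : G.Subgraph, N.IsPerfectMatching ∧ M ⊆ N.edgeSet

/-- `G` is 3-connected: more than three vertices, and removing any at most two
vertices leaves a connected graph. -/
def IsThreeConnected {V : Type*} [Fintype V] (G : SimpleGraph V) : Prop :=
  4 ≤ Fintype.card V ∧ ∀ S : Set V, S.ncard ≤ 2 → (G.induce Sᶜ).Connected

/-! ### Retracts (bicontraction of all degree-two vertices) -/

/-- `f : V → W` realizes `H` as the retract of `G`: the fibers of `f` are exactly
the closed neighborhoods of the degree-two vertices of `G` (and singletons
otherwise), and adjacency in `H` is induced by `G`. -/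
def IsRetractMap {V W : Type*} (G : SimpleGraph V) (H : SimpleGraph W) (f : V → W) : Prop :=
  Function.Surjective f ∧
  (∀ u v : V, f u = f v ↔ (u = v ∨ ∃ v₀ : V, mdeg G v₀ = 2 ∧
      u ∈ insert v₀ (G.neighborSet v₀) ∧ v ∈ insert v₀ (G.neighborSet v₀))) ∧
  (∀ x y : W, H.Adj x y ↔ (x ≠ y ∧ ∃ u v : V, G.Adj u v ∧ f u = x ∧ f v = y))

/-- The retract obtained via `f` is a simple graph, i.e. no two distinct edges of `G`
become parallel after the bicontractions. -/
def RetractMapSimple {V W : Type*} (G : SimpleGraph V) (f : V → W) : Prop :=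
  ∀ e₁ ∈ G.edgeSet, ∀ e₂ ∈ G.edgeSet,
    Sym2.map f e₁ = Sym2.map f e₂ → ¬ (Sym2.map f e₁).IsDiag → e₁ = e₂

/-- An edge `e` of a brace `G` is thin if the retract of `G − e` is also a brace. -/
def IsThinEdge {V : Type*} (G : SimpleGraph V) (e : Sym2 V) : Prop :=
  e ∈ G.edgeSet ∧ ∃ (sH : Set V) (H : SimpleGraph sH) (f : V → sH),
    IsRetractMap (G.deleteEdges {e}) H f ∧ IsBrace H

/-- `e` is a strictly thin edge of `G`, with retract `H` realized by the map `f`: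
the retract of `G − e` is a brace and is simple. -/
def IsStrictlyThinVia {V W : Type*} (G : SimpleGraph V) (e : Sym2 V)
    (H : SimpleGraph W) (f : V → W) : Prop :=
  e ∈ G.edgeSet ∧ IsRetractMap (G.deleteEdges {e}) H f ∧ IsBrace H ∧
    RetractMapSimple (G.deleteEdges {e}) f

/-- `e` is a strictly thin edge of the simple brace `G`. -/
def IsStrictlyThinEdge {V : Type*} (G : SimpleGraph V) (e : Sym2 V) : Prop :=
  ∃ (sH : Set V) (H : SimpleGraph sH) (f : V → sH), IsStrictlyThinVia G e H f

/-- The index of a (strictly thin) edge `e`, computed from `G' = G − e`: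
the number of vertices of degree two in `G'`. -/
noncomputable def thinIndex {V : Type*} (G' : SimpleGraph V) : ℕ :=
  {v : V | mdeg G' v = 2}.ncard

/-- An inner vertex of `G' = G − e`: a vertex of degree two. -/
def IsInnerVertex {V : Type*} (G' : SimpleGraph V) (v : V) : Prop := mdeg G' v = 2

/-- An outer vertex of `G' = G − e`: a neighbor of an inner vertex. -/
def IsOuterVertex {V : Type*} (G' : SimpleGraph V) (v : V) : Prop :=
  ∃ u : V, IsInnerVertex G' u ∧ G'.Adj u v

/-- `(e, F)` is a minimality-preserving pair of the minimal brace `G`, where the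
retract `H` of `G − e` is realized by `f`: the edge `e` is strictly thin and
`H − F` is a minimal brace. -/
def IsMPPVia {V W : Type*} (G : SimpleGraph V) (H : SimpleGraph W) (f : V → W)
    (e : Sym2 V) (F : Set (Sym2 W)) : Prop :=
  IsMinimalBrace G ∧ IsStrictlyThinVia G e H f ∧ F ⊆ H.edgeSet ∧
    IsMinimalBrace (H.deleteEdges F)

/-! ### Stable extensions -/

/-- The `S`-extension of `J` with respect to `S = {a₁, a₂, b₁, b₂}`:
two new vertices `a₀ = inr 0` and `b₀ = inr 1` and five new edges
`a₀b₁, a₀b₂, b₀a₁, b₀a₂, a₀b₀`. -/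
def stableExtGraph {U : Type*} (J : SimpleGraph U) (a₁ a₂ b₁ b₂ : U) :
    SimpleGraph (U ⊕ Fin 2) :=
  SimpleGraph.fromRel (fun x y =>
    match x, y with
    | Sum.inl u, Sum.inl v => J.Adj u v
    | Sum.inl u, Sum.inr k => (k = 0 ∧ (u = b₁ ∨ u = b₂)) ∨ (k = 1 ∧ (u = a₁ ∨ u = a₂))
    | Sum.inr j, Sum.inr k => j ≠ k
    | Sum.inr _, Sum.inl _ => False)

/-- `G` is (isomorphic to) a stable-extension of the connected bipartite graph `J`,
with respect to some stable set meeting each color class in exactly two vertices. -/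
def IsStableExtensionOf {V U : Type*} (G : SimpleGraph V) (J : SimpleGraph U) : Prop :=
  ∃ (A B : Set U) (a₁ a₂ b₁ b₂ : U), J.Connected ∧ IsBipartition J A B ∧
    a₁ ∈ A ∧ a₂ ∈ A ∧ b₁ ∈ B ∧ b₂ ∈ B ∧ a₁ ≠ a₂ ∧ b₁ ≠ b₂ ∧
    ¬ J.Adj a₁ b₁ ∧ ¬ J.Adj a₁ b₂ ∧ ¬ J.Adj a₂ b₁ ∧ ¬ J.Adj a₂ b₂ ∧
    Nonempty (G ≃g stableExtGraph J a₁ a₂ b₁ b₂)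

/-! ### Concrete families of graphs -/

/-- The complete graph on two vertices. -/
def K2graph : SimpleGraph (Fin 2) := ⊤

/-- The cycle graph `Cₙ` on `ZMod n`. -/
def cycleGraph (n : ℕ) : SimpleGraph (ZMod n) :=
  SimpleGraph.fromRel (fun x y => x - y = 1)

/-- The Möbius ladder `M_{2m}`: the cycle `C_{2m}` plus the long chords. -/
def mobiusLadder (m : ℕ) : SimpleGraph (ZMod (2 * m)) :=
  SimpleGraph.fromRel (fun x y => x - y = 1 ∨ x - y = (m : ZMod (2 * m)))

/-- The prism (ladder) over the cycle `Cₘ`. -/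
def prismGraph (m : ℕ) : SimpleGraph (ZMod m × Bool) :=
  SimpleGraph.fromRel (fun p q => (p.2 = q.2 ∧ p.1 - q.1 = 1) ∨ (p.1 = q.1 ∧ p.2 ≠ q.2))

/-- The biwheel `B_{2m+2}`: the cycle `C_{2m}` plus two nonadjacent hubs, one joined to
all even rim vertices, the other to all odd rim vertices. `B_{2n} = biwheel (n-1)`. -/
def biwheel (m : ℕ) : SimpleGraph (ZMod (2 * m) ⊕ Fin 2) :=
  SimpleGraph.fromRel (fun x y =>
    match x, y with
    | Sum.inl a, Sum.inl b => a - b = 1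
    | Sum.inl a, Sum.inr k => (k = 0 ∧ Even a) ∨ (k = 1 ∧ ¬ Even a)
    | Sum.inr _, _ => False)

/-- The complete bipartite graph `K_{3,3}`. -/
def K33graph : SimpleGraph (Fin 3 ⊕ Fin 3) := completeBipartiteGraph (Fin 3) (Fin 3)

/-- The family `𝒢` : `K₂`, `C₄` and the McCuaig braces
(prisms, Möbius ladders and biwheels). -/
def InMcCuaigFamily {V : Type*} (G : SimpleGraph V) : Prop :=
  Nonempty (G ≃g K2graph) ∨ Nonempty (G ≃g cycleGraph 4) ∨
  (∃ m : ℕ, 3 ≤ m ∧ Nonempty (G ≃g prismGraph m)) ∨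
  (∃ m : ℕ, 3 ≤ m ∧ Nonempty (G ≃g mobiusLadder m)) ∨
  (∃ m : ℕ, 3 ≤ m ∧ Nonempty (G ≃g biwheel m))

/-- The graph `Q_{2n}` (for `n ≥ 5`): color classes `{0, …, n-1}` on each side; the
hubs `0, 1` of each side are joined to all vertices `2, …, n-1` of the other side,
and the vertices `2, …, n-1` form a perfect matching between the two sides.
`Qgraph 5 = Q₁₀`, `Qgraph 6 = Q₁₂`, and `Qgraph n = Q_{2n}` of the family `𝒬` for `n ≥ 6`. -/
def Qgraph (n : ℕ) : SimpleGraph (Fin n ⊕ Fin n) :=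
  SimpleGraph.fromRel (fun x y =>
    match x, y with
    | Sum.inl i, Sum.inr j =>
        ((i : ℕ) < 2 ∧ 2 ≤ (j : ℕ)) ∨ ((j : ℕ) < 2 ∧ 2 ≤ (i : ℕ)) ∨
          ((i : ℕ) = (j : ℕ) ∧ 2 ≤ (i : ℕ))
    | _, _ => False)

/-- `Q₁₀⁺`: the graph `Q₁₀` plus an edge joining two noncubic vertices that lie in
distinct color classes (and in distinct `K_{3,3}`-pieces of the tight cut
decomposition of `Q₁₀`). -/
def Q10plus : SimpleGraph (Fin 5 ⊕ Fin 5) :=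
  Qgraph 5 ⊔ SimpleGraph.fromEdgeSet {s((Sum.inl 0 : Fin 5 ⊕ Fin 5), (Sum.inr 0 : Fin 5 ⊕ Fin 5))}

/-- The bipartite complement of `G` with respect to the color classes `A`, `B`. -/
def bipComplement {V : Type*} (G : SimpleGraph V) (A B : Set V) : SimpleGraph V :=
  SimpleGraph.fromRel (fun u v => u ∈ A ∧ v ∈ B ∧ ¬ G.Adj u v)

/-! ### Bi-splitting and expansion operations -/

/-- `G` is obtained from `H` by bi-splitting the noncubic vertex `b` into `b₁ a₀ b₂`,
as witnessed by the projection `f : W → V` (which sends `b₁, a₀, b₂` to `b` and is a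
bijection elsewhere). The edges of `H` at `b` are distributed between `b₁` and `b₂`,
each receiving at least two, and `a₀` is a new vertex adjacent precisely to `b₁, b₂`. -/
def IsBisplitMap {V W : Type*} (H : SimpleGraph V) (b : V) (G : SimpleGraph W)
    (b₁ a₀ b₂ : W) (f : W → V) : Prop :=
  4 ≤ mdeg H b ∧
  Function.Surjective f ∧ f b₁ = b ∧ f a₀ = b ∧ f b₂ = b ∧
  b₁ ≠ b₂ ∧ a₀ ≠ b₁ ∧ a₀ ≠ b₂ ∧
  (∀ u v : W, f u = f v → u = v ∨
      (u ∈ ({b₁, a₀, b₂} : Set W) ∧ v ∈ ({b₁, a₀, b₂} : Set W))) ∧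
  G.neighborSet a₀ = {b₁, b₂} ∧
  3 ≤ mdeg G b₁ ∧ 3 ≤ mdeg G b₂ ∧ ¬ G.Adj b₁ b₂ ∧
  (∀ x : W, x ≠ a₀ → ¬ (G.Adj b₁ x ∧ G.Adj b₂ x)) ∧
  (∀ x y : V, H.Adj x y ↔ (x ≠ y ∧ ∃ u v : W, G.Adj u v ∧ f u = x ∧ f v = y))

/-- Expansion of index zero: adding an edge joining two nonadjacent vertices in
distinct color classes. -/
def ExpansionZero {W V : Type*} (G : SimpleGraph W) (H : SimpleGraph V) : Prop :=
  ∃ (A B : Set V) (a b : V), IsBipartition H A B ∧ a ∈ A ∧ b ∈ B ∧ ¬ H.Adj a b ∧ a ≠ b ∧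
    Nonempty (G ≃g (H ⊔ SimpleGraph.fromEdgeSet {s(a, b)}))

/-- Expansion of index one: `G = H{a → a₁b₀a₂} + b₀w`, where `a, w` are in the same
color class of `H` and `a` is noncubic. -/
def ExpansionOne {W V : Type*} (G : SimpleGraph W) (H : SimpleGraph V) : Prop :=
  ∃ (A B : Set V) (a w : V), IsBipartition H A B ∧
    ((a ∈ A ∧ w ∈ A) ∨ (a ∈ B ∧ w ∈ B)) ∧ a ≠ w ∧ 4 ≤ mdeg H a ∧
    ∃ (G₁ : SimpleGraph W) (a₁ b₀ a₂ : W) (f : W → V) (w' : W),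
      IsBisplitMap H a G₁ a₁ b₀ a₂ f ∧ f w' = w ∧
      G = G₁ ⊔ SimpleGraph.fromEdgeSet {s(b₀, w')}

/-- Expansion of index two: `G = H{a → a₁b₀a₂}{b → b₁a₀b₂} + a₀b₀`, where `a, b` are
noncubic vertices of `H` in distinct color classes. -/
def ExpansionTwo {W V : Type*} (G : SimpleGraph W) (H : SimpleGraph V) : Prop :=
  ∃ (A B : Set V) (a b : V), IsBipartition H A B ∧ a ∈ A ∧ b ∈ B ∧
    4 ≤ mdeg H a ∧ 4 ≤ mdeg H b ∧
    ∃ (sm : Set W) (G₁ : SimpleGraph sm) (a₁ b₀ a₂ : sm) (g : sm → V),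
      IsBisplitMap H a G₁ a₁ b₀ a₂ g ∧
      ∃ (b' : sm) (G₂ : SimpleGraph W) (b₁ a₀ b₂ : W) (f : W → sm) (b₀' : W),
        g b' = b ∧ IsBisplitMap G₁ b' G₂ b₁ a₀ b₂ f ∧ f b₀' = b₀ ∧
        G = G₂ ⊔ SimpleGraph.fromEdgeSet {s(a₀, b₀')}

/-- `G` is obtained from `H` by an expansion operation (of index zero, one or two). -/
def IsExpansionOf {W V : Type*} (G : SimpleGraph W) (H : SimpleGraph V) : Prop :=
  ExpansionZero G H ∨ ExpansionOne G H ∨ ExpansionTwo G H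

/-! ### Narrow minimality-preserving pairs -/

/-- The properties of `F` (viewed in `G − e` via the retract map `fm`) required by the
Main Theorem: (i) if `index(e) = 1` then some outer vertex `v` has `F ⊆ ∂(v)`;
(ii) if `index(e) = 2` then some adjacent outer vertices `u, w` have `F ⊆ ∂({u,w})`;
(iii) for each `f ∈ F`, an end of `f` is cubic iff it is an outer vertex. -/
def NarrowProps {V W : Type*} (G : SimpleGraph V) (fm : V → W) (e : Sym2 V)
    (F : Set (Sym2 W)) : Prop :=
  (thinIndex (G.deleteEdges {e}) = 1 →
      ∃ v : V, IsOuterVertex (G.deleteEdges {e}) v ∧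
        ∀ g ∈ (G.deleteEdges {e}).edgeSet, Sym2.map fm g ∈ F → v ∈ g) ∧
  (thinIndex (G.deleteEdges {e}) = 2 →
      ∃ u w : V, IsOuterVertex (G.deleteEdges {e}) u ∧ IsOuterVertex (G.deleteEdges {e}) w ∧
        (G.deleteEdges {e}).Adj u w ∧
        ∀ g ∈ (G.deleteEdges {e}).edgeSet, Sym2.map fm g ∈ F →
          ((u ∈ g ∧ w ∉ g) ∨ (w ∈ g ∧ u ∉ g))) ∧
  (∀ g ∈ (G.deleteEdges {e}).edgeSet, Sym2.map fm g ∈ F →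
      ∀ x : V, x ∈ g → (mdeg G x = 3 ↔ IsOuterVertex (G.deleteEdges {e}) x))

/-- A narrow minimality-preserving pair, as in the Main Theorem. -/
def IsNarrowMPP {V W : Type*} (G : SimpleGraph V) (H : SimpleGraph W) (fm : V → W)
    (e : Sym2 V) (F : Set (Sym2 W)) : Prop :=
  IsMPPVia G H fm e F ∧
  (F = ∅ ∨ NarrowProps G fm e F) ∧
  F.ncard ≤ thinIndex (G.deleteEdges {e}) + 1 ∧
  (thinIndex (G.deleteEdges {e}) = 1 ∧ F.ncard = 2 →
    IsStableExtensionOf G (H.deleteEdges F))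


section Lemmas
variable {V : Type*} {G : SimpleGraph V} {A B : Set V}

lemma bip_symm (h : IsBipartition G A B) : IsBipartition G B A := by
  refine ⟨by rw [Set.union_comm]; exact h.1, by rw [Set.inter_comm]; exact h.2.1,
    fun u v huv => (h.2.2 u v huv).symm⟩

lemma bip_not_mem (h : IsBipartition G A B) {v : V} (hv : v ∈ A) : v ∉ B := by
  intro hb
  have := h.2.1
  have : v ∈ A ∩ B := ⟨hv, hb⟩
  rw [h.2.1] at this
  exact this

lemma bip_mem (h : IsBipartition G A B) (v : V) : v ∈ A ∨ v ∈ B := by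
  have : v ∈ A ∪ B := by rw [h.1]; trivial
  exact this

lemma bip_adj (h : IsBipartition G A B) {u v : V} (hu : u ∈ A) (huv : G.Adj u v) : v ∈ B := by
  rcases h.2.2 u v huv with ⟨_, hv⟩ | ⟨hu', _⟩
  · exact hv
  · exact absurd hu' (bip_not_mem h hu)

/-- The partner of a vertex in a perfect matching. -/
noncomputable def partner {M : G.Subgraph} (hM : M.IsPerfectMatching) (v : V) : V :=
  (Subgraph.isPerfectMatching_iff.mp hM v).choose

lemma partner_adj {M : G.Subgraph} (hM : M.IsPerfectMatching) (v : V) :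
    M.Adj v (partner hM v) :=
  (Subgraph.isPerfectMatching_iff.mp hM v).choose_spec.1

lemma partner_eq {M : G.Subgraph} (hM : M.IsPerfectMatching) {v w : V} (h : M.Adj v w) :
    partner hM v = w :=
  ((Subgraph.isPerfectMatching_iff.mp hM v).choose_spec.2 w h).symm

lemma partner_invol {M : G.Subgraph} (hM : M.IsPerfectMatching) (v : V) :
    partner hM (partner hM v) = v :=
  partner_eq hM ((partner_adj hM v).symm)

lemma partner_inj {M : G.Subgraph} (hM : M.IsPerfectMatching) {x y : V}
    (h : partner hM x = partner hM y) : x = y := by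
  have := congrArg (partner hM) h
  rwa [partner_invol, partner_invol] at this

lemma partner_gadj {M : G.Subgraph} (hM : M.IsPerfectMatching) (v : V) :
    G.Adj v (partner hM v) :=
  M.adj_sub (partner_adj hM v)

lemma cross_of_walk {X : Set V} : ∀ {x y : V}, G.Walk x y → x ∈ X → y ∉ X →
    ∃ u v : V, G.Adj u v ∧ u ∈ X ∧ v ∉ X
  | _, _, SimpleGraph.Walk.nil, hx, hy => absurd hx hy
  | _, _, SimpleGraph.Walk.cons (v := b) hab w, hx, hy => by
    by_cases hb : b ∈ X
    · exact cross_of_walk w hb hy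
    · exact ⟨_, b, hab, hx, hb⟩

lemma exists_cross_edge (hc : G.Connected) {X : Set V} {x y : V} (hx : x ∈ X) (hy : y ∉ X) :
    ∃ u v : V, G.Adj u v ∧ u ∈ X ∧ v ∉ X := by
  obtain ⟨w⟩ := hc x y
  exact cross_of_walk w hx hy


lemma hall_pm {W : Type*} [Fintype W] {H : SimpleGraph W} {A B : Set W}
    (hbip : IsBipartition H A B) (hcard : A.ncard = B.ncard)
    (hall : ∀ Z : Set W, Z ⊆ A → Z.ncard ≤ (setNbhd H Z).ncard) :
    HasPerfectMatching H := by
  classical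
  have hHall : ∀ s : Finset ↥A, s.card ≤ (s.biUnion (fun a => H.neighborFinset ↑a)).card := by
    intro s
    have h1 : (((s.image Subtype.val) : Finset W) : Set W) ⊆ A := by
      intro x hx
      simp only [Finset.coe_image, Set.mem_image, Finset.mem_coe] at hx
      obtain ⟨a, _, rfl⟩ := hx
      exact a.2
    have h2 : setNbhd H (((s.image Subtype.val) : Finset W) : Set W)
        = ↑(s.biUnion (fun a => H.neighborFinset ↑a)) := by
      ext v
      simp only [setNbhd, Set.mem_setOf_eq, Finset.coe_biUnion, Set.mem_iUnion,
        Finset.coe_image, Set.mem_image, Finset.mem_coe, mem_neighborFinset,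
        Set.mem_iUnion]
      constructor
      · rintro ⟨z, ⟨a, ha, rfl⟩, hadj⟩
        exact ⟨a, ha, hadj⟩
      · rintro ⟨a, ha, hadj⟩
        exact ⟨↑a, ⟨a, ha, rfl⟩, hadj⟩
    have h3 : s.card = (((s.image Subtype.val) : Finset W) : Set W).ncard := by
      rw [Set.ncard_coe_finset, Finset.card_image_of_injective _ Subtype.val_injective]
    rw [h3, ← Set.ncard_coe_finset, ← h2]
    exact hall _ h1
  obtain ⟨f, finj, hf⟩ := (Finset.all_card_le_biUnion_card_iff_existsInjective'
    (fun a : ↥A => H.neighborFinset ↑a)).mp hHall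
  have hfadj : ∀ a : ↥A, H.Adj ↑a (f a) := fun a => by
    have := hf a; rwa [mem_neighborFinset] at this
  have hfB : ∀ a : ↥A, f a ∈ B := fun a => bip_adj hbip a.2 (hfadj a)
  have hgsurj : ∀ v : W, v ∈ B → ∃ a : ↥A, f a = v := by
    intro v hv
    set g : ↥A → ↥B := fun a => ⟨f a, hfB a⟩ with hg
    have ginj : Function.Injective g := by
      intro x y hxy
      exact finj (congrArg Subtype.val hxy)
    have hcards : Fintype.card ↥A = Fintype.card ↥B := by
      rw [← Nat.card_eq_fintype_card, ← Nat.card_eq_fintype_card,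
        Nat.card_coe_set_eq, Nat.card_coe_set_eq, hcard]
    have gbij := (Fintype.bijective_iff_injective_and_card g).mpr ⟨ginj, hcards⟩
    obtain ⟨a, ha⟩ := gbij.2 ⟨v, hv⟩
    exact ⟨a, congrArg Subtype.val ha⟩
  refine ⟨⟨Set.univ, fun v w => (∃ h : v ∈ A, f ⟨v, h⟩ = w) ∨ (∃ h : w ∈ A, f ⟨w, h⟩ = v),
    ?_, fun _ => trivial, ?_⟩, ?_⟩
  · rintro v w (⟨h, rfl⟩ | ⟨h, rfl⟩)
    · exact hfadj ⟨v, h⟩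
    · exact (hfadj ⟨w, h⟩).symm
  · constructor; rintro v w (⟨h, rfl⟩ | ⟨h, rfl⟩)
    · exact Or.inr ⟨h, rfl⟩
    · exact Or.inl ⟨h, rfl⟩
  · rw [Subgraph.isPerfectMatching_iff]
    intro v
    by_cases hv : v ∈ A
    · refine ⟨f ⟨v, hv⟩, Or.inl ⟨hv, rfl⟩, ?_⟩
      rintro w (⟨h, rfl⟩ | ⟨h, he⟩)
      · rfl
      · exact absurd hv (bip_not_mem (bip_symm hbip) (he ▸ hfB ⟨w, h⟩))
    · have hvB : v ∈ B := (bip_mem hbip v).resolve_left hv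
      obtain ⟨a, ha⟩ := hgsurj v hvB
      refine ⟨↑a, Or.inr ⟨a.2, by rw [Subtype.eta]; exact ha⟩, ?_⟩
      rintro w (⟨h, _⟩ | ⟨h, he⟩)
      · exact absurd h hv
      · have : (⟨w, h⟩ : ↥A) = a := finj (by rw [he, ha])
        exact congrArg Subtype.val this

lemma bip_card [Fintype V] (hbip : IsBipartition G A B) :
    A.ncard + B.ncard = Fintype.card V := by
  rw [← Set.ncard_union_eq (Set.disjoint_iff_inter_eq_empty.mpr hbip.2.1), hbip.1,
    Set.ncard_univ, Nat.card_eq_fintype_card]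

lemma A_card_ge [Fintype V] (hbip : IsBipartition G A B) (hAB : A.ncard = B.ncard)
    (horder : 6 ≤ Fintype.card V) : 3 ≤ A.ncard := by
  have := bip_card hbip
  omega

lemma setNbhd_sub (hbip : IsBipartition G A B) {Z : Set V} (hZ : Z ⊆ A) :
    setNbhd G Z ⊆ B := by
  rintro v ⟨z, hz, hadj⟩
  exact bip_adj hbip (hZ hz) hadj

lemma nbhd_to_pm4 [Fintype V] (hbip : IsBipartition G A B) (hAB : A.ncard = B.ncard)
    (horder : 6 ≤ Fintype.card V)
    (hii : ∀ Z : Set V, Z ⊆ A → Z.Nonempty → Z.ncard < A.ncard - 1 →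
      Z.ncard + 2 ≤ (setNbhd G Z).ncard)
    {a₁ a₂ b₁ b₂ : V} (ha₁ : a₁ ∈ A) (ha₂ : a₂ ∈ A) (hb₁ : b₁ ∈ B) (hb₂ : b₂ ∈ B)
    (ha : a₁ ≠ a₂) (hb : b₁ ≠ b₂) :
    HasPerfectMatching (G.induce ({a₁, a₂, b₁, b₂}ᶜ : Set V)) := by
  classical
  have hA3 : 3 ≤ A.ncard := A_card_ge hbip hAB horder
  set T : Set V := {a₁, a₂, b₁, b₂} with hT
  set S : Set V := Tᶜ with hS
  haveI : Fintype ↥S := Set.Finite.fintype (Set.toFinite S)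
  set A' : Set ↥S := {v | ↑v ∈ A} with hA'
  set B' : Set ↥S := {v | ↑v ∈ B} with hB'
  have hmemT : ∀ v : V, v ∈ T ↔ (v = a₁ ∨ v = a₂ ∨ v = b₁ ∨ v = b₂) := by
    intro v; simp [hT]
  have hbip' : IsBipartition (G.induce S) A' B' := by
    refine ⟨?_, ?_, ?_⟩
    · ext v
      simp only [Set.mem_union, hA', hB', Set.mem_setOf_eq, Set.mem_univ, iff_true]
      exact bip_mem hbip ↑v
    · ext v
      simp only [Set.mem_inter_iff, hA', hB', Set.mem_setOf_eq, Set.mem_empty_iff_false,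
        iff_false, not_and]
      exact fun h => bip_not_mem hbip h
    · intro u v huv
      exact hbip.2.2 ↑u ↑v (by simpa using huv)
  have himA : Subtype.val '' A' = A \ {a₁, a₂} := by
    ext x
    constructor
    · rintro ⟨⟨y, hy⟩, hyA, rfl⟩
      refine ⟨hyA, ?_⟩
      intro hx
      apply hy
      rw [hmemT]
      rcases hx with h | h
      · exact Or.inl h
      · exact Or.inr (Or.inl h)
    · rintro ⟨hxA, hx⟩
      have hxS : x ∈ S := by
        rw [hS, Set.mem_compl_iff, hmemT]
        push_neg
        refine ⟨?_, ?_, ?_, ?_⟩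
        · intro h; exact hx (Or.inl h)
        · intro h; exact hx (Or.inr h)
        · rintro rfl; exact bip_not_mem hbip hxA hb₁
        · rintro rfl; exact bip_not_mem hbip hxA hb₂
      exact ⟨⟨x, hxS⟩, hxA, rfl⟩
  have himB : Subtype.val '' B' = B \ {b₁, b₂} := by
    ext x
    constructor
    · rintro ⟨⟨y, hy⟩, hyB, rfl⟩
      refine ⟨hyB, ?_⟩
      intro hx
      apply hy
      rw [hmemT]
      rcases hx with h | h
      · exact Or.inr (Or.inr (Or.inl h))
      · exact Or.inr (Or.inr (Or.inr h))
    · rintro ⟨hxB, hx⟩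
      have hxS : x ∈ S := by
        rw [hS, Set.mem_compl_iff, hmemT]
        push_neg
        refine ⟨?_, ?_, ?_, ?_⟩
        · rintro rfl; exact bip_not_mem hbip ha₁ hxB
        · rintro rfl; exact bip_not_mem hbip ha₂ hxB
        · intro h; exact hx (Or.inl h)
        · intro h; exact hx (Or.inr h)
      exact ⟨⟨x, hxS⟩, hxB, rfl⟩
  have hA'card : A'.ncard = A.ncard - 2 := by
    rw [← Set.ncard_image_of_injective A' Subtype.val_injective, himA, Set.ncard_diff
      (by rintro x (rfl | rfl); exacts [ha₁, ha₂]), Set.ncard_pair ha]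
  have hB'card : B'.ncard = B.ncard - 2 := by
    rw [← Set.ncard_image_of_injective B' Subtype.val_injective, himB, Set.ncard_diff
      (by rintro x (rfl | rfl); exacts [hb₁, hb₂]), Set.ncard_pair hb]
  apply hall_pm hbip' (by rw [hA'card, hB'card, hAB])
  intro Z' hZ'
  rcases Z'.eq_empty_or_nonempty with rfl | hne
  · simp
  set Z : Set V := Subtype.val '' Z' with hZdef
  have hZA : Z ⊆ A := by
    rintro x ⟨y, hy, rfl⟩
    exact (hZ' hy : ↑y ∈ A)
  have hZcard : Z.ncard = Z'.ncard := Set.ncard_image_of_injective Z' Subtype.val_injective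
  have hZsmall : Z.ncard < A.ncard - 1 := by
    have h1 : Z.ncard ≤ A'.ncard := by
      rw [hZcard]
      exact Set.ncard_le_ncard hZ' (Set.toFinite _)
    rw [hA'card] at h1
    omega
  have hZne : Z.Nonempty := hne.image _
  have hmain := hii Z hZA hZne hZsmall
  -- transfer the neighborhood
  have hsub : setNbhd G Z \ {b₁, b₂} ⊆ Subtype.val '' (setNbhd (G.induce S) Z') := by
    rintro v ⟨⟨z, hzZ, hadj⟩, hvb⟩
    have hvB : v ∈ B := bip_adj hbip (hZA hzZ) hadj
    have hvS : v ∈ S := by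
      rw [hS, Set.mem_compl_iff, hmemT]
      push_neg
      refine ⟨?_, ?_, ?_, ?_⟩
      · rintro rfl; exact bip_not_mem hbip ha₁ hvB
      · rintro rfl; exact bip_not_mem hbip ha₂ hvB
      · intro h; exact hvb (Or.inl h)
      · intro h; exact hvb (Or.inr h)
    obtain ⟨z', hz', rfl⟩ := hzZ
    exact ⟨⟨v, hvS⟩, ⟨z', hz', hadj⟩, rfl⟩
  have h1 : setNbhd G Z ⊆ (setNbhd G Z \ {b₁, b₂}) ∪ {b₁, b₂} := by
    intro x hx
    by_cases hxb : x ∈ ({b₁, b₂} : Set V)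
    · exact Or.inr hxb
    · exact Or.inl ⟨hx, hxb⟩
  have h2 : (setNbhd G Z).ncard ≤ (setNbhd G Z \ {b₁, b₂}).ncard + 2 := by
    calc (setNbhd G Z).ncard ≤ ((setNbhd G Z \ {b₁, b₂}) ∪ {b₁, b₂}).ncard :=
          Set.ncard_le_ncard h1 (Set.toFinite _)
      _ ≤ (setNbhd G Z \ {b₁, b₂}).ncard + ({b₁, b₂} : Set V).ncard := Set.ncard_union_le _ _
      _ = (setNbhd G Z \ {b₁, b₂}).ncard + 2 := by rw [Set.ncard_pair hb]
  have h3 : (setNbhd G Z \ {b₁, b₂}).ncard ≤ (setNbhd (G.induce S) Z').ncard := by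
    rw [← Set.ncard_image_of_injective (setNbhd (G.induce S) Z') Subtype.val_injective]
    exact Set.ncard_le_ncard hsub (Set.toFinite _)
  omega

lemma edge_repr (hbip : IsBipartition G A B) {e : Sym2 V} (he : e ∈ G.edgeSet) :
    ∃ a b, e = s(a, b) ∧ G.Adj a b ∧ a ∈ A ∧ b ∈ B := by
  induction e with
  | _ x y =>
    rw [mem_edgeSet] at he
    rcases hbip.2.2 x y he with ⟨hx, hy⟩ | ⟨hx, hy⟩
    · exact ⟨x, y, rfl, he, hx, hy⟩
    · exact ⟨y, x, Sym2.eq_swap, he.symm, hy, hx⟩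

lemma pm_extend {a₁ a₂ b₁ b₂ : V}
    (h12 : a₁ ≠ a₂) (h1b1 : a₁ ≠ b₁) (h1b2 : a₁ ≠ b₂) (h2b1 : a₂ ≠ b₁) (h2b2 : a₂ ≠ b₂)
    (hb12 : b₁ ≠ b₂) (hadj₁ : G.Adj a₁ b₁) (hadj₂ : G.Adj a₂ b₂)
    (hpm : HasPerfectMatching (G.induce ({a₁, a₂, b₁, b₂}ᶜ : Set V))) :
    ∃ N : G.Subgraph, N.IsPerfectMatching ∧ s(a₁, b₁) ∈ N.edgeSet ∧ s(a₂, b₂) ∈ N.edgeSet := by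
  classical
  obtain ⟨M, hM⟩ := hpm
  have hmemS : ∀ v : V, v ∈ ({a₁, a₂, b₁, b₂}ᶜ : Set V) ↔
      ¬(v = a₁ ∨ v = a₂ ∨ v = b₁ ∨ v = b₂) := by
    intro v; simp
  refine ⟨⟨Set.univ,
    fun v w => (∃ (hv : v ∈ ({a₁, a₂, b₁, b₂}ᶜ : Set V))
        (hw : w ∈ ({a₁, a₂, b₁, b₂}ᶜ : Set V)), M.Adj ⟨v, hv⟩ ⟨w, hw⟩) ∨
      (v = a₁ ∧ w = b₁) ∨ (v = b₁ ∧ w = a₁) ∨ (v = a₂ ∧ w = b₂) ∨ (v = b₂ ∧ w = a₂),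
    ?_, fun _ => trivial, ?_⟩, ?_, ?_, ?_⟩
  · rintro v w (⟨hv, hw, h⟩ | ⟨rfl, rfl⟩ | ⟨rfl, rfl⟩ | ⟨rfl, rfl⟩ | ⟨rfl, rfl⟩)
    · exact M.adj_sub h
    · exact hadj₁
    · exact hadj₁.symm
    · exact hadj₂
    · exact hadj₂.symm
  · constructor; rintro v w (⟨hv, hw, h⟩ | ⟨rfl, rfl⟩ | ⟨rfl, rfl⟩ | ⟨rfl, rfl⟩ | ⟨rfl, rfl⟩)
    · exact Or.inl ⟨hw, hv, h.symm⟩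
    · exact Or.inr (Or.inr (Or.inl ⟨rfl, rfl⟩))
    · exact Or.inr (Or.inl ⟨rfl, rfl⟩)
    · exact Or.inr (Or.inr (Or.inr (Or.inr ⟨rfl, rfl⟩)))
    · exact Or.inr (Or.inr (Or.inr (Or.inl ⟨rfl, rfl⟩)))
  · rw [Subgraph.isPerfectMatching_iff]
    intro v
    by_cases hv : v ∈ ({a₁, a₂, b₁, b₂}ᶜ : Set V)
    · obtain ⟨w', hw', huniq⟩ := Subgraph.isPerfectMatching_iff.mp hM ⟨v, hv⟩
      refine ⟨↑w', Or.inl ⟨hv, w'.2, by rwa [Subtype.eta]⟩, ?_⟩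
      rintro w (⟨hv', hw, h⟩ | ⟨h, rfl⟩ | ⟨h, rfl⟩ | ⟨h, rfl⟩ | ⟨h, rfl⟩)
      · have h2 : M.Adj ⟨v, hv⟩ ⟨w, hw⟩ := h
        exact congrArg Subtype.val (huniq ⟨w, hw⟩ h2)
      · exact absurd (Or.inl h) ((hmemS v).mp hv)
      · exact absurd (Or.inr (Or.inr (Or.inl h))) ((hmemS v).mp hv)
      · exact absurd (Or.inr (Or.inl h)) ((hmemS v).mp hv)
      · exact absurd (Or.inr (Or.inr (Or.inr h))) ((hmemS v).mp hv)
    · have hvT : v = a₁ ∨ v = a₂ ∨ v = b₁ ∨ v = b₂ := by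
        by_contra h; exact hv ((hmemS v).mpr h)
      rcases hvT with h | h | h | h
      · refine ⟨b₁, Or.inr (Or.inl ⟨h, rfl⟩), ?_⟩
        rintro w (⟨hv', _, _⟩ | ⟨h', rfl⟩ | ⟨h', rfl⟩ | ⟨h', rfl⟩ | ⟨h', rfl⟩)
        · exact absurd (Or.inl h) ((hmemS v).mp hv')
        · rfl
        · exact absurd (h.symm.trans h') h1b1
        · exact absurd (h.symm.trans h') h12
        · exact absurd (h.symm.trans h') h1b2
      · refine ⟨b₂, Or.inr (Or.inr (Or.inr (Or.inl ⟨h, rfl⟩))), ?_⟩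
        rintro w (⟨hv', _, _⟩ | ⟨h', rfl⟩ | ⟨h', rfl⟩ | ⟨h', rfl⟩ | ⟨h', rfl⟩)
        · exact absurd (Or.inr (Or.inl h)) ((hmemS v).mp hv')
        · exact absurd (h.symm.trans h') h12.symm
        · exact absurd (h.symm.trans h') h2b1
        · rfl
        · exact absurd (h.symm.trans h') h2b2
      · refine ⟨a₁, Or.inr (Or.inr (Or.inl ⟨h, rfl⟩)), ?_⟩
        rintro w (⟨hv', _, _⟩ | ⟨h', rfl⟩ | ⟨h', rfl⟩ | ⟨h', rfl⟩ | ⟨h', rfl⟩)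
        · exact absurd (Or.inr (Or.inr (Or.inl h))) ((hmemS v).mp hv')
        · exact absurd (h.symm.trans h') h1b1.symm
        · rfl
        · exact absurd (h.symm.trans h') h2b1.symm
        · exact absurd (h.symm.trans h') hb12
      · refine ⟨a₂, Or.inr (Or.inr (Or.inr (Or.inr ⟨h, rfl⟩))), ?_⟩
        rintro w (⟨hv', _, _⟩ | ⟨h', rfl⟩ | ⟨h', rfl⟩ | ⟨h', rfl⟩ | ⟨h', rfl⟩)
        · exact absurd (Or.inr (Or.inr (Or.inr h))) ((hmemS v).mp hv')
        · exact absurd (h.symm.trans h') h1b2.symm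
        · exact absurd (h.symm.trans h') hb12.symm
        · exact absurd (h.symm.trans h') h2b2.symm
        · rfl
  · exact Or.inr (Or.inl ⟨rfl, rfl⟩)
  · exact Or.inr (Or.inr (Or.inr (Or.inl ⟨rfl, rfl⟩)))

lemma bip_ne (h : IsBipartition G A B) {a b : V} (ha : a ∈ A) (hb : b ∈ B) : a ≠ b := by
  rintro rfl; exact bip_not_mem h ha hb

lemma exists_three {s : Set V} (hs : s.Finite) (h3 : 3 ≤ s.ncard) :
    ∃ a b c, a ∈ s ∧ b ∈ s ∧ c ∈ s ∧ a ≠ b ∧ a ≠ c ∧ b ≠ c := by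
  obtain ⟨a, ha⟩ := Set.nonempty_of_ncard_ne_zero (s := s) (by omega)
  have h1 : (s \ {a}).ncard = s.ncard - 1 := Set.ncard_diff_singleton_of_mem ha
  obtain ⟨b, hb⟩ := Set.nonempty_of_ncard_ne_zero (s := s \ {a}) (by omega)
  have hab : a ≠ b := fun h => hb.2 (by simp [h.symm])
  have h2 : ({a, b} : Set V) ⊆ s := by rintro x (rfl | rfl); exacts [ha, hb.1]
  have h2' : (s \ {a, b}).ncard = s.ncard - 2 := by
    rw [Set.ncard_diff h2 (Set.toFinite _), Set.ncard_pair hab]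
  obtain ⟨c, hc⟩ := Set.nonempty_of_ncard_ne_zero (s := s \ {a, b}) (by omega)
  refine ⟨a, b, c, ha, hb.1, hc.1, hab, ?_, ?_⟩
  · rintro rfl; exact hc.2 (by simp)
  · rintro rfl; exact hc.2 (by simp)

lemma induce_partner_adj {S : Set V} {M : (G.induce S).Subgraph}
    (hM : M.IsPerfectMatching) {v : V} (hv : v ∈ S) :
    G.Adj v ↑(partner hM ⟨v, hv⟩) := by
  have := M.adj_sub (partner_adj hM ⟨v, hv⟩)
  simpa using this

lemma pm4_to_twoext [Fintype V] (hbip : IsBipartition G A B) (hAB : A.ncard = B.ncard)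
    (horder : 6 ≤ Fintype.card V)
    (hiii : ∀ a₁ ∈ A, ∀ a₂ ∈ A, ∀ b₁ ∈ B, ∀ b₂ ∈ B, a₁ ≠ a₂ → b₁ ≠ b₂ →
      HasPerfectMatching (G.induce ({a₁, a₂, b₁, b₂}ᶜ : Set V))) :
    IsTwoExtendable G := by
  classical
  have hA3 : 3 ≤ A.ncard := A_card_ge hbip hAB horder
  have hB3 : 3 ≤ B.ncard := hAB ▸ hA3
  constructor
  · -- existence of a matching of size two
    obtain ⟨a₁, a₂, a₃, ha₁, ha₂, ha₃, h12, h13, h23⟩ := exists_three (Set.toFinite A) hA3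
    obtain ⟨b₁, b₂, -, hb₁, hb₂, -, hb12, -, -⟩ := exists_three (Set.toFinite B) hB3
    obtain ⟨M₁, hM₁⟩ := hiii a₁ ha₁ a₂ ha₂ b₁ hb₁ b₂ hb₂ h12 hb12
    have ha₃S : a₃ ∈ ({a₁, a₂, b₁, b₂}ᶜ : Set V) := by
      simp only [Set.mem_compl_iff, Set.mem_insert_iff, Set.mem_singleton_iff]
      push_neg
      exact ⟨h13.symm, h23.symm, bip_ne hbip ha₃ hb₁, bip_ne hbip ha₃ hb₂⟩
    set b₃ : V := ↑(partner hM₁ ⟨a₃, ha₃S⟩) with hb₃def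
    have hadj₃ : G.Adj a₃ b₃ := induce_partner_adj hM₁ ha₃S
    have hb₃B : b₃ ∈ B := bip_adj hbip ha₃ hadj₃
    have hb₃S : b₃ ∈ ({a₁, a₂, b₁, b₂}ᶜ : Set V) := (partner hM₁ ⟨a₃, ha₃S⟩).2
    have hb₃T := (Set.mem_compl_iff _ _).mp hb₃S
    simp only [Set.mem_insert_iff, Set.mem_singleton_iff] at hb₃T
    push_neg at hb₃T
    have hb₃1 : b₃ ≠ b₁ := hb₃T.2.2.1
    have hb₃2 : b₃ ≠ b₂ := hb₃T.2.2.2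
    obtain ⟨M₂, hM₂⟩ := hiii a₂ ha₂ a₃ ha₃ b₂ hb₂ b₃ hb₃B h23 hb₃2.symm
    have ha₁S : a₁ ∈ ({a₂, a₃, b₂, b₃}ᶜ : Set V) := by
      simp only [Set.mem_compl_iff, Set.mem_insert_iff, Set.mem_singleton_iff]
      push_neg
      exact ⟨h12, h13, bip_ne hbip ha₁ hb₂, bip_ne hbip ha₁ hb₃B⟩
    set b₄ : V := ↑(partner hM₂ ⟨a₁, ha₁S⟩) with hb₄def
    have hadj₄ : G.Adj a₁ b₄ := induce_partner_adj hM₂ ha₁S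
    have hb₄B : b₄ ∈ B := bip_adj hbip ha₁ hadj₄
    have hb₄S : b₄ ∈ ({a₂, a₃, b₂, b₃}ᶜ : Set V) := (partner hM₂ ⟨a₁, ha₁S⟩).2
    have hb₄T := (Set.mem_compl_iff _ _).mp hb₄S
    simp only [Set.mem_insert_iff, Set.mem_singleton_iff] at hb₄T
    push_neg at hb₄T
    have hb₄3 : b₄ ≠ b₃ := hb₄T.2.2.2
    have hne : s(a₃, b₃) ≠ s(a₁, b₄) := by
      rw [Ne, Sym2.eq_iff]
      push_neg
      constructor
      · intro h; exact absurd h h13.symm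
      · intro h; exact absurd h (bip_ne hbip ha₃ hb₄B)
    refine ⟨{s(a₃, b₃), s(a₁, b₄)}, ⟨?_, ?_⟩, Set.ncard_pair hne⟩
    · rintro e (rfl | rfl)
      · exact hadj₃
      · exact hadj₄
    · intro e₁' he₁' e₂' he₂' hnee v hv
      simp only [Set.mem_insert_iff, Set.mem_singleton_iff] at he₁' he₂'
      have key : ¬(v ∈ s(a₃, b₃) ∧ v ∈ s(a₁, b₄)) := by
        rintro ⟨hv1, hv2⟩
        rw [Sym2.mem_iff] at hv1 hv2
        rcases hv1 with rfl | rfl <;> rcases hv2 with h | h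
        · exact h13 h.symm
        · exact bip_ne hbip ha₃ hb₄B h
        · exact bip_ne hbip ha₁ hb₃B h.symm
        · exact hb₄3 h.symm
      rcases he₁' with rfl | rfl <;> rcases he₂' with rfl | rfl
      · exact hnee rfl
      · exact key hv
      · exact key ⟨hv.2, hv.1⟩
      · exact hnee rfl
  · -- every matching of size two extends
    intro Mset hMset hcard
    obtain ⟨e₁, e₂, hne, rfl⟩ := Set.ncard_eq_two.mp hcard
    obtain ⟨a₁, b₁, he₁, hadj₁, ha₁, hb₁⟩ :=
      edge_repr hbip (e := e₁) (hMset.1 (Set.mem_insert _ _))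
    obtain ⟨a₂, b₂, he₂, hadj₂, ha₂, hb₂⟩ :=
      edge_repr hbip (e := e₂) (hMset.1 (Set.mem_insert_of_mem _ rfl))
    have hdisj : ∀ v : V, ¬(v ∈ e₁ ∧ v ∈ e₂) :=
      hMset.2 e₁ (Set.mem_insert _ _) e₂ (Set.mem_insert_of_mem _ rfl) hne
    have hmem₁ : a₁ ∈ e₁ := by rw [he₁]; exact Sym2.mem_mk_left _ _
    have hmem₁' : b₁ ∈ e₁ := by rw [he₁]; exact Sym2.mem_mk_right _ _
    have hmem₂ : a₂ ∈ e₂ := by rw [he₂]; exact Sym2.mem_mk_left _ _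
    have hmem₂' : b₂ ∈ e₂ := by rw [he₂]; exact Sym2.mem_mk_right _ _
    have h12 : a₁ ≠ a₂ := by rintro rfl; exact hdisj a₁ ⟨hmem₁, hmem₂⟩
    have h1b2 : a₁ ≠ b₂ := by rintro rfl; exact hdisj a₁ ⟨hmem₁, hmem₂'⟩
    have h2b1 : a₂ ≠ b₁ := by rintro rfl; exact hdisj a₂ ⟨hmem₁', hmem₂⟩
    have hb12 : b₁ ≠ b₂ := by rintro rfl; exact hdisj b₁ ⟨hmem₁', hmem₂'⟩
    obtain ⟨N, hN, hNe₁, hNe₂⟩ := pm_extend h12 hadj₁.ne h1b2 h2b1 hadj₂.ne hb12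
      hadj₁ hadj₂ (hiii a₁ ha₁ a₂ ha₂ b₁ hb₁ b₂ hb₂ h12 hb12)
    refine ⟨N, hN, ?_⟩
    intro e he
    simp only [Set.mem_insert_iff, Set.mem_singleton_iff] at he
    rcases he with rfl | rfl
    · rwa [he₁]
    · rwa [he₂]

lemma sym2_repr (e : Sym2 V) : ∃ x y, e = s(x, y) :=
  Sym2.ind (fun x y => ⟨x, y, rfl⟩) e

lemma exists_disjoint_edge [Fintype V] (horder : 6 ≤ Fintype.card V)
    (h2e : IsTwoExtendable G) {e : Sym2 V} (he : e ∈ G.edgeSet) :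
    ∃ f ∈ G.edgeSet, f ≠ e ∧ ∀ v : V, ¬(v ∈ e ∧ v ∈ f) := by
  classical
  obtain ⟨a, b, rfl⟩ := sym2_repr e
  obtain ⟨M0, hM0set, hM0card⟩ := h2e.1
  obtain ⟨f₁, f₂, hne, rfl⟩ := Set.ncard_eq_two.mp hM0card
  have hf₁E : f₁ ∈ G.edgeSet := hM0set.1 (Set.mem_insert _ _)
  have hf₂E : f₂ ∈ G.edgeSet := hM0set.1 (Set.mem_insert_of_mem _ rfl)
  have hdisj12 : ∀ v : V, ¬(v ∈ f₁ ∧ v ∈ f₂) :=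
    hM0set.2 f₁ (Set.mem_insert _ _) f₂ (Set.mem_insert_of_mem _ rfl) hne
  by_cases h1 : f₁ = s(a, b)
  · refine ⟨f₂, hf₂E, by rw [← h1]; exact hne.symm, ?_⟩
    intro v hv
    exact hdisj12 v ⟨h1 ▸ hv.1, hv.2⟩
  by_cases h2 : f₂ = s(a, b)
  · refine ⟨f₁, hf₁E, by rw [← h2]; exact hne, ?_⟩
    intro v hv
    exact hdisj12 v ⟨hv.2, h2 ▸ hv.1⟩
  by_cases hm1 : ∀ v : V, ¬(v ∈ s(a, b) ∧ v ∈ f₁)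
  · exact ⟨f₁, hf₁E, h1, hm1⟩
  by_cases hm2 : ∀ v : V, ¬(v ∈ s(a, b) ∧ v ∈ f₂)
  · exact ⟨f₂, hf₂E, h2, hm2⟩
  push_neg at hm1 hm2
  obtain ⟨va, hva_e, hva_f⟩ := hm1
  obtain ⟨vb, hvb_e, hvb_f⟩ := hm2
  obtain ⟨x₁, y₁, rfl⟩ := sym2_repr f₁
  obtain ⟨x₂, y₂, rfl⟩ := sym2_repr f₂
  set U : Set V := {x₁, y₁, x₂, y₂} with hUdef
  have hUcard : U.ncard ≤ 4 := by
    calc U.ncard ≤ ({y₁, x₂, y₂} : Set V).ncard + 1 := Set.ncard_insert_le _ _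
      _ ≤ (({x₂, y₂} : Set V).ncard + 1) + 1 := by
          exact Nat.add_le_add_right (Set.ncard_insert_le _ _) 1
      _ ≤ ((({y₂} : Set V).ncard + 1) + 1) + 1 := by
          exact Nat.add_le_add_right (Nat.add_le_add_right (Set.ncard_insert_le _ _) 1) 1
      _ ≤ 4 := by rw [Set.ncard_singleton]
  obtain ⟨c, hc⟩ : ∃ c : V, c ∉ U := by
    by_contra h
    push_neg at h
    have : (Set.univ : Set V) ⊆ U := fun v _ => h v
    have := Set.ncard_le_ncard this (Set.toFinite _)
    rw [Set.ncard_univ, Nat.card_eq_fintype_card] at this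
    omega
  have haU : a ∈ U ∧ b ∈ U := by
    rw [Sym2.mem_iff] at hva_e hvb_e hva_f hvb_f
    have hvanb : va ≠ vb := by
      rintro rfl
      exact hdisj12 va ⟨by rw [Sym2.mem_iff]; exact hva_f, by rw [Sym2.mem_iff]; exact hvb_f⟩
    have hmem : ∀ w : V, (w = x₁ ∨ w = y₁) ∨ (w = x₂ ∨ w = y₂) → w ∈ U := by
      rintro w ((rfl | rfl) | (rfl | rfl)) <;> simp [hUdef]
    rcases hva_e with rfl | rfl <;> rcases hvb_e with rfl | rfl
    · exact absurd rfl hvanb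
    · exact ⟨hmem _ (Or.inl hva_f), hmem _ (Or.inr hvb_f)⟩
    · exact ⟨hmem _ (Or.inr hvb_f), hmem _ (Or.inl hva_f)⟩
    · exact absurd rfl hvanb
  obtain ⟨N, hN, hsub⟩ := h2e.2 _ hM0set hM0card
  have hN₁ : N.Adj x₁ y₁ := hsub (Set.mem_insert _ _)
  have hN₂ : N.Adj x₂ y₂ := hsub (Set.mem_insert_of_mem _ rfl)
  have hpU : ∀ w : V, w ∈ U → partner hN w ∈ U := by
    intro w hw
    rw [hUdef] at hw
    simp only [Set.mem_insert_iff, Set.mem_singleton_iff] at hw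
    rcases hw with rfl | rfl | rfl | rfl
    · rw [partner_eq hN hN₁]; simp [hUdef]
    · rw [partner_eq hN hN₁.symm]; simp [hUdef]
    · rw [partner_eq hN hN₂]; simp [hUdef]
    · rw [partner_eq hN hN₂.symm]; simp [hUdef]
  refine ⟨s(c, partner hN c), N.adj_sub (partner_adj hN c), ?_, ?_⟩
  · intro hgeq
    have : a ∈ s(c, partner hN c) := by rw [hgeq]; exact Sym2.mem_mk_left _ _
    rw [Sym2.mem_iff] at this
    rcases this with rfl | h
    · exact hc haU.1
    · have : partner hN a = c := by rw [h, partner_invol]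
      exact hc (this ▸ hpU a haU.1)
  · intro v ⟨hv1, hv2⟩
    rw [Sym2.mem_iff] at hv1 hv2
    have hvU : v ∈ U := by rcases hv1 with rfl | rfl; exacts [haU.1, haU.2]
    rcases hv2 with rfl | h
    · exact hc hvU
    · have : partner hN v = c := by rw [h, partner_invol]
      exact hc (this ▸ hpU v hvU)

lemma twoext_matching_covered [Fintype V] (hconn : G.Connected)
    (horder : 6 ≤ Fintype.card V) (h2e : IsTwoExtendable G) : IsMatchingCovered G := by
  obtain ⟨M0, hM0set, hM0card⟩ := h2e.1
  refine ⟨hconn, ?_, ?_⟩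
  · obtain ⟨f₁, f₂, hne, rfl⟩ := Set.ncard_eq_two.mp hM0card
    exact ⟨f₁, hM0set.1 (Set.mem_insert _ _)⟩
  · intro e he
    obtain ⟨f, hfE, hfne, hfdisj⟩ := exists_disjoint_edge horder h2e he
    have hms : IsMatchingSet G {e, f} := by
      refine ⟨?_, ?_⟩
      · rintro g hg
        simp only [Set.mem_insert_iff, Set.mem_singleton_iff] at hg
        rcases hg with rfl | rfl; exacts [he, hfE]
      · intro g₁ hg₁ g₂ hg₂ hgne v hv
        simp only [Set.mem_insert_iff, Set.mem_singleton_iff] at hg₁ hg₂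
        rcases hg₁ with rfl | rfl <;> rcases hg₂ with rfl | rfl
        · exact hgne rfl
        · exact hfdisj v hv
        · exact hfdisj v ⟨hv.2, hv.1⟩
        · exact hgne rfl
    obtain ⟨N, hN, hNsub⟩ := h2e.2 _ hms (Set.ncard_pair hfne.symm)
    exact ⟨N, hN, hNsub (Set.mem_insert _ _)⟩

lemma partner_maps_nbhd {M : G.Subgraph} (hM : M.IsPerfectMatching) {Z : Set V} {z : V}
    (hz : z ∈ Z) : partner hM z ∈ setNbhd G Z :=
  ⟨z, hz, partner_gadj hM z⟩

/-- Injection of `Z` into a target set via the partner map gives a cardinality bound. -/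
lemma ncard_le_of_partner_maps [Fintype V] {M : G.Subgraph} (hM : M.IsPerfectMatching)
    {Z T : Set V} (h : ∀ z ∈ Z, partner hM z ∈ T) : Z.ncard ≤ T.ncard := by
  have h1 : partner hM '' Z ⊆ T := by rintro x ⟨z, hz, rfl⟩; exact h z hz
  calc Z.ncard = (partner hM '' Z).ncard :=
        (Set.ncard_image_of_injOn (fun x _ y _ h => partner_inj hM h)).symm
    _ ≤ T.ncard := Set.ncard_le_ncard h1 (Set.toFinite _)

lemma no_deficiency [Fintype V] (hconn : G.Connected) (hbip : IsBipartition G A B)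
    (horder : 6 ≤ Fintype.card V) (h2e : IsTwoExtendable G)
    {Z : Set V} (hZA : Z ⊆ A) (hZne : Z.Nonempty) (hZpr : Z ≠ A) :
    Z.ncard < (setNbhd G Z).ncard := by
  classical
  by_contra hle
  push_neg at hle
  set W : Set V := setNbhd G Z with hWdef
  have hWB : W ⊆ B := setNbhd_sub hbip hZA
  have hZpos : 0 < Z.ncard := (Set.ncard_pos (Set.toFinite _)).mpr hZne
  -- a vertex of A outside Z
  obtain ⟨a', ha'A, ha'Z⟩ : ∃ a', a' ∈ A ∧ a' ∉ Z := by
    by_contra h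
    push_neg at h
    exact hZpr (Set.Subset.antisymm hZA h)
  have ha'out : a' ∉ Z ∪ W := by
    rintro (h | h)
    · exact ha'Z h
    · exact bip_not_mem hbip ha'A (hWB h)
  obtain ⟨z₀, hz₀⟩ := hZne
  -- a crossing edge, necessarily from W to A \ Z
  obtain ⟨u, v, huv, hu, hv⟩ := exists_cross_edge hconn (X := Z ∪ W) (Or.inl hz₀) ha'out
  have huW : u ∈ W := by
    rcases hu with h | h
    · exact absurd (Or.inr ⟨u, h, huv⟩) hv
    · exact h
  have hvA : v ∈ A := by
    rcases bip_mem hbip v with h | h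
    · exact h
    · exact absurd (bip_adj (bip_symm hbip) (hWB huW) huv) (bip_not_mem (bip_symm hbip) h)
  have hvZ : v ∉ Z := fun h => hv (Or.inl h)
  -- the edge s(v, u) and a disjoint edge
  have hvuE : s(v, u) ∈ G.edgeSet := huv.symm
  obtain ⟨f, hfE, hfne, hfdisj⟩ := exists_disjoint_edge horder h2e hvuE
  obtain ⟨a₂, b₂, rfl, hadj₂, ha₂, hb₂⟩ := edge_repr hbip hfE
  have hvmem : v ∈ s(v, u) := Sym2.mem_mk_left _ _
  have humem : u ∈ s(v, u) := Sym2.mem_mk_right _ _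
  have hms : IsMatchingSet G {s(v, u), s(a₂, b₂)} := by
    refine ⟨?_, ?_⟩
    · rintro g hg
      simp only [Set.mem_insert_iff, Set.mem_singleton_iff] at hg
      rcases hg with rfl | rfl; exacts [hvuE, hfE]
    · intro g₁ hg₁ g₂ hg₂ hgne w hw
      simp only [Set.mem_insert_iff, Set.mem_singleton_iff] at hg₁ hg₂
      rcases hg₁ with rfl | rfl <;> rcases hg₂ with rfl | rfl
      · exact hgne rfl
      · exact hfdisj w hw
      · exact hfdisj w ⟨hw.2, hw.1⟩
      · exact hgne rfl
  obtain ⟨N, hN, hNsub⟩ := h2e.2 _ hms (Set.ncard_pair hfne.symm)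
  have hN₁ : N.Adj v u := Subgraph.mem_edgeSet.mp (hNsub (Set.mem_insert _ _))
  have hN₂ : N.Adj a₂ b₂ := Subgraph.mem_edgeSet.mp (hNsub (Set.mem_insert_of_mem _ rfl))
  have hpu : partner hN u = v := partner_eq hN hN₁.symm
  have hpb₂ : partner hN b₂ = a₂ := partner_eq hN hN₂.symm
  have hpz_ne_u : ∀ z ∈ Z, partner hN z ≠ u := by
    intro z hz h
    have : z = v := by rw [← hpu, ← h, partner_invol]
    exact hvZ (this ▸ hz)
  by_cases ha₂Z : a₂ ∈ Z
  · -- a₂ ∈ Z : then b₂ ∈ W ; inject Z \ {a₂} into W \ {u, b₂}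
    have hb₂W : b₂ ∈ W := ⟨a₂, ha₂Z, hadj₂⟩
    have hub₂ : u ≠ b₂ := by
      rintro rfl
      exact hfdisj u ⟨humem, Sym2.mem_mk_right _ _⟩
    have hsub2 : ({u, b₂} : Set V) ⊆ W := by rintro x (rfl | rfl); exacts [huW, hb₂W]
    have hkey : ∀ z ∈ Z \ {a₂}, partner hN z ∈ W \ {u, b₂} := by
      rintro z ⟨hz, hza⟩
      refine ⟨partner_maps_nbhd hN hz, ?_⟩
      rintro (h | h)
      · exact hpz_ne_u z hz h
      · apply hza
        have : z = a₂ := by rw [← hpb₂, ← h, partner_invol]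
        simp [this]
    have hc1 := ncard_le_of_partner_maps hN hkey
    rw [Set.ncard_diff_singleton_of_mem ha₂Z,
      Set.ncard_diff hsub2 (Set.toFinite _), Set.ncard_pair hub₂] at hc1
    have hWle : W.ncard ≤ Z.ncard := hle
    have h2W : 2 ≤ W.ncard := by
      rw [← Set.ncard_pair hub₂]
      exact Set.ncard_le_ncard hsub2 (Set.toFinite _)
    omega
  · by_cases hb₂W : b₂ ∈ W
    · -- inject Z into W \ {u, b₂}
      have hub₂ : u ≠ b₂ := by
        rintro rfl
        exact hfdisj u ⟨humem, Sym2.mem_mk_right _ _⟩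
      have hsub2 : ({u, b₂} : Set V) ⊆ W := by rintro x (rfl | rfl); exacts [huW, hb₂W]
      have hkey : ∀ z ∈ Z, partner hN z ∈ W \ {u, b₂} := by
        intro z hz
        refine ⟨partner_maps_nbhd hN hz, ?_⟩
        rintro (h | h)
        · exact hpz_ne_u z hz h
        · apply ha₂Z
          have : z = a₂ := by rw [← hpb₂, ← h, partner_invol]
          exact this ▸ hz
      have hc1 := ncard_le_of_partner_maps hN hkey
      rw [Set.ncard_diff hsub2 (Set.toFinite _), Set.ncard_pair hub₂] at hc1
      have h2W : 2 ≤ W.ncard := by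
        rw [← Set.ncard_pair hub₂]
        exact Set.ncard_le_ncard hsub2 (Set.toFinite _)
      omega
    · -- inject Z into W \ {u}
      have hkey : ∀ z ∈ Z, partner hN z ∈ W \ {u} := by
        intro z hz
        refine ⟨partner_maps_nbhd hN hz, ?_⟩
        intro h
        exact hpz_ne_u z hz h
      have hc1 := ncard_le_of_partner_maps hN hkey
      rw [Set.ncard_diff_singleton_of_mem huW] at hc1
      have hWpos : 0 < W.ncard := (Set.ncard_pos (Set.toFinite _)).mpr ⟨u, huW⟩
      omega

lemma twoext_nbhd [Fintype V] (hconn : G.Connected) (hbip : IsBipartition G A B)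
    (hAB : A.ncard = B.ncard) (horder : 6 ≤ Fintype.card V) (h2e : IsTwoExtendable G)
    {Z : Set V} (hZA : Z ⊆ A) (hZne : Z.Nonempty) (hZsm : Z.ncard < A.ncard - 1) :
    Z.ncard + 2 ≤ (setNbhd G Z).ncard := by
  classical
  by_contra hcon
  push_neg at hcon
  have hA3 : 3 ≤ A.ncard := A_card_ge hbip hAB horder
  set W : Set V := setNbhd G Z with hWdef
  have hWB : W ⊆ B := setNbhd_sub hbip hZA
  have hZpr : Z ≠ A := by
    intro h
    rw [h] at hZsm
    omega
  have hdef := no_deficiency hconn hbip horder h2e hZA hZne hZpr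
  have hWn : (setNbhd G Z).ncard = W.ncard := rfl
  have hWcard : W.ncard = Z.ncard + 1 := by omega
  have hZpos : 0 < Z.ncard := (Set.ncard_pos (Set.toFinite _)).mpr hZne
  -- the relation: edges between A \ Z and W
  set R : V → V → Prop := fun a b => a ∈ A ∧ a ∉ Z ∧ b ∈ W ∧ G.Adj a b with hRdef
  by_cases hex : ∃ a b, R a b
  swap
  · -- no such edge: contradicts connectivity
    push_neg at hex
    obtain ⟨a', ha'A, ha'Z⟩ : ∃ a', a' ∈ A ∧ a' ∉ Z := by
      by_contra h
      push_neg at h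
      exact hZpr (Set.Subset.antisymm hZA h)
    have ha'out : a' ∉ Z ∪ W := by
      rintro (h | h)
      · exact ha'Z h
      · exact bip_not_mem hbip ha'A (hWB h)
    obtain ⟨z₀, hz₀⟩ := hZne
    obtain ⟨u, v, huv, hu, hv⟩ := exists_cross_edge hconn (X := Z ∪ W) (Or.inl hz₀) ha'out
    have huW : u ∈ W := by
      rcases hu with h | h
      · exact absurd (Or.inr ⟨u, h, huv⟩) hv
      · exact h
    have hvA : v ∈ A := by
      rcases bip_mem hbip v with h | h
      · exact h
      · exact absurd (bip_adj (bip_symm hbip) (hWB huW) huv) (bip_not_mem (bip_symm hbip) h)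
    exact hex v u ⟨hvA, fun h => hv (Or.inl h), huW, huv.symm⟩
  obtain ⟨a₀, b₀, hR₀⟩ := hex
  by_cases htwo : ∃ a₁ b₁ a₂ b₂, R a₁ b₁ ∧ R a₂ b₂ ∧ a₁ ≠ a₂ ∧ b₁ ≠ b₂
  · -- two disjoint edges from A \ Z to W
    obtain ⟨a₁, b₁, a₂, b₂, ⟨ha₁A, ha₁Z, hb₁W, hadj₁⟩, ⟨ha₂A, ha₂Z, hb₂W, hadj₂⟩, ha12, hb12⟩ :=
      htwo
    have hb₁B := hWB hb₁W
    have hb₂B := hWB hb₂W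
    have hedne : s(a₁, b₁) ≠ s(a₂, b₂) := by
      rw [Ne, Sym2.eq_iff]
      push_neg
      constructor
      · intro h; exact absurd h ha12
      · intro h; exact absurd h (bip_ne hbip ha₁A hb₂B)
    have hms : IsMatchingSet G {s(a₁, b₁), s(a₂, b₂)} := by
      refine ⟨?_, ?_⟩
      · rintro g hg
        simp only [Set.mem_insert_iff, Set.mem_singleton_iff] at hg
        rcases hg with rfl | rfl; exacts [hadj₁, hadj₂]
      · intro g₁ hg₁ g₂ hg₂ hgne w hw
        simp only [Set.mem_insert_iff, Set.mem_singleton_iff] at hg₁ hg₂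
        have key : ¬(w ∈ s(a₁, b₁) ∧ w ∈ s(a₂, b₂)) := by
          rintro ⟨h1, h2⟩
          rw [Sym2.mem_iff] at h1 h2
          rcases h1 with rfl | rfl <;> rcases h2 with h | h
          · exact ha12 h
          · exact bip_ne hbip ha₁A hb₂B h
          · exact bip_ne hbip ha₂A hb₁B h.symm
          · exact hb12 h
        rcases hg₁ with rfl | rfl <;> rcases hg₂ with rfl | rfl
        · exact hgne rfl
        · exact key hw
        · exact key ⟨hw.2, hw.1⟩
        · exact hgne rfl
    obtain ⟨N, hN, hNsub⟩ := h2e.2 _ hms (Set.ncard_pair hedne)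
    have hN₁ : N.Adj a₁ b₁ := Subgraph.mem_edgeSet.mp (hNsub (Set.mem_insert _ _))
    have hN₂ : N.Adj a₂ b₂ := Subgraph.mem_edgeSet.mp (hNsub (Set.mem_insert_of_mem _ rfl))
    have hsub2 : ({b₁, b₂} : Set V) ⊆ W := by rintro x (rfl | rfl); exacts [hb₁W, hb₂W]
    have hkey : ∀ z ∈ Z, partner hN z ∈ W \ {b₁, b₂} := by
      intro z hz
      refine ⟨partner_maps_nbhd hN hz, ?_⟩
      rintro (h | h)
      · have : z = a₁ := by rw [← partner_eq hN hN₁.symm, ← h, partner_invol]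
        exact ha₁Z (this ▸ hz)
      · have : z = a₂ := by rw [← partner_eq hN hN₂.symm, ← h, partner_invol]
        exact ha₂Z (this ▸ hz)
    have hc1 := ncard_le_of_partner_maps hN hkey
    rw [Set.ncard_diff hsub2 (Set.toFinite _), Set.ncard_pair hb12] at hc1
    omega
  · -- all A\Z–W edges pass through a single vertex
    have key : ∀ a b a' b', R a b → R a' b' → a = a' ∨ b = b' := by
      intro a b a' b' h h'
      by_contra hcc
      push_neg at hcc
      exact htwo ⟨a, b, a', b', h, h', hcc.1, hcc.2⟩
    by_cases hstarA : ∀ a b, R a b → a = a₀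
    · -- star centred at a₀ ∈ A \ Z : apply no_deficiency to W on the B side
      have hNW : setNbhd G W ⊆ Z ∪ {a₀} := by
        rintro x ⟨w, hwW, hadj⟩
        have hxA : x ∈ A := bip_adj (bip_symm hbip) (hWB hwW) hadj
        by_cases hxZ : x ∈ Z
        · exact Or.inl hxZ
        · exact Or.inr (hstarA x w ⟨hxA, hxZ, hwW, hadj.symm⟩)
      have hWne : W.Nonempty := Set.nonempty_of_ncard_ne_zero (by omega)
      have hWpr : W ≠ B := by
        intro h
        have : W.ncard = B.ncard := by rw [h]
        omega
      have hdefW := no_deficiency hconn (bip_symm hbip) horder h2e hWB hWne hWpr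
      have hc2 : (setNbhd G W).ncard ≤ Z.ncard + 1 := by
        calc (setNbhd G W).ncard ≤ (Z ∪ {a₀}).ncard := Set.ncard_le_ncard hNW (Set.toFinite _)
          _ ≤ Z.ncard + ({a₀} : Set V).ncard := Set.ncard_union_le _ _
          _ = Z.ncard + 1 := by rw [Set.ncard_singleton]
      omega
    · -- star centred at b₀ ∈ W : apply no_deficiency to W \ {b₀} on the B side
      push_neg at hstarA
      obtain ⟨a₁, b₁, hR₁, ha₁0⟩ := hstarA
      have hb₁0 : b₁ = b₀ := (key a₁ b₁ a₀ b₀ hR₁ hR₀).resolve_left ha₁0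
      subst hb₁0
      have hstarB : ∀ a b, R a b → b = b₁ := by
        intro a b h
        rcases key a b a₀ b₁ h hR₀ with h1 | h1
        · rcases key a b a₁ b₁ h hR₁ with h2 | h2
          · exact absurd (h2 ▸ h1 : a₁ = a₀) ha₁0
          · exact h2
        · exact h1
      set Y : Set V := W \ {b₁} with hYdef
      have hYB : Y ⊆ B := fun y hy => hWB hy.1
      have hYcard : Y.ncard = Z.ncard := by
        rw [hYdef, Set.ncard_diff_singleton_of_mem hR₁.2.2.1]
        omega
      have hYne : Y.Nonempty := Set.nonempty_of_ncard_ne_zero (by omega)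
      have hYpr : Y ≠ B := by
        intro h
        have : Y.ncard = B.ncard := by rw [h]
        omega
      have hdefY := no_deficiency hconn (bip_symm hbip) horder h2e hYB hYne hYpr
      have hNY : setNbhd G Y ⊆ Z := by
        rintro x ⟨y, hyY, hadj⟩
        have hxA : x ∈ A := bip_adj (bip_symm hbip) (hYB hyY) hadj
        by_cases hxZ : x ∈ Z
        · exact hxZ
        · have := hstarB x y ⟨hxA, hxZ, hyY.1, hadj.symm⟩
          exact absurd this (by simpa [hYdef] using hyY.2)
      have hc2 : (setNbhd G Y).ncard ≤ Z.ncard := Set.ncard_le_ncard hNY (Set.toFinite _)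
      omega

lemma brace_nbhd [Fintype V] (hbip : IsBipartition G A B)
    (hAB : A.ncard = B.ncard) (horder : 6 ≤ Fintype.card V) (hbrace : IsBrace G)
    {Z : Set V} (hZA : Z ⊆ A) (hZne : Z.Nonempty) (hZsm : Z.ncard < A.ncard - 1) :
    Z.ncard + 2 ≤ (setNbhd G Z).ncard := by
  classical
  by_contra hcon
  push_neg at hcon
  obtain ⟨-, hmc, htc⟩ := hbrace
  have hA3 : 3 ≤ A.ncard := A_card_ge hbip hAB horder
  have hcardV : A.ncard + B.ncard = Fintype.card V := bip_card hbip
  set W : Set V := setNbhd G Z with hWdef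
  have hWB : W ⊆ B := setNbhd_sub hbip hZA
  have hZpos : 0 < Z.ncard := (Set.ncard_pos (Set.toFinite _)).mpr hZne
  obtain ⟨e₀, he₀⟩ := hmc.2.1
  obtain ⟨M₀, hM₀, -⟩ := hmc.2.2 e₀ he₀
  have hinj : Z.ncard ≤ W.ncard :=
    ncard_le_of_partner_maps hM₀ (fun z hz => partner_maps_nbhd hM₀ hz)
  have hZWdisj : Disjoint Z W :=
    Set.disjoint_left.mpr (fun x hxZ hxW => bip_not_mem hbip (hZA hxZ) (hWB hxW))
  have hXcard : (Z ∪ W).ncard = Z.ncard + W.ncard := Set.ncard_union_eq hZWdisj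
  have himg : ∀ {M : G.Subgraph} (hM : M.IsPerfectMatching), partner hM '' Z ⊆ W := by
    rintro M hM x ⟨z, hz, rfl⟩
    exact partner_maps_nbhd hM hz
  have himgcard : ∀ {M : G.Subgraph} (hM : M.IsPerfectMatching),
      (partner hM '' Z).ncard = Z.ncard := fun hM =>
    Set.ncard_image_of_injOn (fun x _ y _ h => partner_inj _ h)
  rcases (by omega : W.ncard = Z.ncard ∨ W.ncard = Z.ncard + 1) with hWZ | hWZ
  · -- |N(Z)| = |Z| : contradiction with connectivity and matching covered
    have hfull : ∀ {M : G.Subgraph} (hM : M.IsPerfectMatching), partner hM '' Z = W := by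
      intro M hM
      exact Set.eq_of_subset_of_ncard_le (himg hM) (by rw [himgcard hM, hWZ]) (Set.toFinite _)
    obtain ⟨y, hy⟩ : ∃ y, y ∉ Z ∪ W := by
      by_contra h
      push_neg at h
      have h2 : (Set.univ : Set V) ⊆ Z ∪ W := fun v _ => h v
      have h3 := Set.ncard_le_ncard h2 (Set.toFinite _)
      rw [Set.ncard_univ, Nat.card_eq_fintype_card] at h3
      omega
    obtain ⟨z₀, hz₀⟩ := hZne
    obtain ⟨u, v, huv, hu, hv⟩ := exists_cross_edge hmc.1 (X := Z ∪ W) (Or.inl hz₀) hy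
    obtain ⟨M₁, hM₁, he₁⟩ := hmc.2.2 s(u, v) huv
    have hpuv : partner hM₁ u = v := partner_eq hM₁ (Subgraph.mem_edgeSet.mp he₁)
    rcases hu with h | h
    · exact hv (Or.inr (hpuv ▸ partner_maps_nbhd hM₁ h))
    · have : u ∈ partner hM₁ '' Z := (hfull hM₁).symm ▸ h
      obtain ⟨z, hzZ, hz⟩ := this
      have : partner hM₁ u = z := by rw [← hz, partner_invol]
      exact hv (Or.inl (by rw [← hpuv, this]; exact hzZ))
  · -- |N(Z)| = |Z| + 1 : the cut ∂(Z ∪ W) is a nontrivial tight cut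
    have htight : IsTightCut G (Z ∪ W) := by
      intro M hM
      have hdiff : (W \ partner hM '' Z).ncard = 1 := by
        rw [Set.ncard_diff (himg hM) (Set.toFinite _), himgcard hM]
        omega
      obtain ⟨bs, hbs⟩ := Set.ncard_eq_one.mp hdiff
      have hbsW : bs ∈ W := by
        have : bs ∈ W \ partner hM '' Z := by rw [hbs]; rfl
        exact this.1
      have hbsP : bs ∉ partner hM '' Z := by
        have : bs ∈ W \ partner hM '' Z := by rw [hbs]; rfl
        exact this.2
      have hpbsA : partner hM bs ∈ A :=
        bip_adj (bip_symm hbip) (hWB hbsW) (partner_gadj hM bs)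
      have hpbsZ : partner hM bs ∉ Z := by
        intro h
        exact hbsP ⟨partner hM bs, h, partner_invol hM bs⟩
      have hpbsX : partner hM bs ∉ Z ∪ W := by
        rintro (h | h)
        · exact hpbsZ h
        · exact bip_not_mem hbip hpbsA (hWB h)
      have hset : M.edgeSet ∩ cutEdges G (Z ∪ W) = {s(bs, partner hM bs)} := by
        ext e
        constructor
        · rintro ⟨heM, -, u, v, rfl, hu, hv⟩
          have hpuv : partner hM u = v := partner_eq hM (Subgraph.mem_edgeSet.mp heM)
          rcases hu with h | h
          · exact absurd (Or.inr (hpuv ▸ partner_maps_nbhd hM h)) hv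
          · have hubs : u = bs := by
              by_contra hne
              have huP : u ∈ partner hM '' Z := by
                by_contra hP
                have : u ∈ W \ partner hM '' Z := ⟨h, hP⟩
                rw [hbs] at this
                exact hne this
              obtain ⟨z, hzZ, hz⟩ := huP
              have : partner hM u = z := by rw [← hz, partner_invol]
              exact hv (Or.inl (by rw [← hpuv, this]; exact hzZ))
            subst hubs
            rw [hpuv]
            rfl
        · rintro rfl
          refine ⟨Subgraph.mem_edgeSet.mpr (partner_adj hM bs), ?_⟩
          exact ⟨(mem_edgeSet G).mpr (partner_gadj hM bs), bs, partner hM bs, rfl,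
            Or.inr hbsW, hpbsX⟩
      rw [hset, Set.ncard_singleton]
    rcases htc (Z ∪ W) htight with ⟨x, hx⟩ | ⟨x, hx⟩
    · have := congrArg Set.ncard hx
      rw [hXcard, Set.ncard_singleton] at this
      omega
    · have hcompl := Set.ncard_add_ncard_compl (Z ∪ W)
      rw [hx, Set.ncard_singleton, hXcard, Nat.card_eq_fintype_card] at hcompl
      omega

lemma cross_unique {M : G.Subgraph} {X : Set V} {u v : V}
    (hset : M.edgeSet ∩ cutEdges G X = {s(u, v)}) (hu : u ∈ X) {x y : V}
    (hxy : M.Adj x y) (hx : x ∈ X) (hy : y ∉ X) : x = u ∧ y = v := by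
  have hmem : s(x, y) ∈ M.edgeSet ∩ cutEdges G X :=
    ⟨Subgraph.mem_edgeSet.mpr hxy, (mem_edgeSet G).mpr (M.adj_sub hxy), x, y, rfl, hx, hy⟩
  rw [hset] at hmem
  have h2 : s(x, y) = s(u, v) := hmem
  rw [Sym2.eq_iff] at h2
  rcases h2 with ⟨h1, h2⟩ | ⟨h1, h2⟩
  · exact ⟨h1, h2⟩
  · exact absurd (h2 ▸ hu) hy

lemma tight_cross {X : Set V} (ht : IsTightCut G X) {M : G.Subgraph}
    (hM : M.IsPerfectMatching) :
    ∃ u v, u ∈ X ∧ v ∉ X ∧ M.edgeSet ∩ cutEdges G X = {s(u, v)} := by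
  obtain ⟨e, he⟩ := Set.ncard_eq_one.mp (ht M hM)
  have hem : e ∈ M.edgeSet ∩ cutEdges G X := by rw [he]; rfl
  obtain ⟨-, -, u, v, rfl, hu, hv⟩ := hem
  exact ⟨u, v, hu, hv, he⟩

lemma tight_count [Fintype V] (hbip : IsBipartition G A B) {M : G.Subgraph}
    (hM : M.IsPerfectMatching) {X : Set V} {u v : V}
    (hset : M.edgeSet ∩ cutEdges G X = {s(u, v)}) (hu : u ∈ X) (hv : v ∉ X) (huA : u ∈ A) :
    (X ∩ A).ncard = (X ∩ B).ncard + 1 := by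
  have hsuv : s(u, v) ∈ M.edgeSet := by
    have : s(u, v) ∈ M.edgeSet ∩ cutEdges G X := by rw [hset]; rfl
    exact this.1
  have hpu : partner hM u = v := partner_eq hM (Subgraph.mem_edgeSet.mp hsuv)
  have hb : ∀ x ∈ X, x ≠ u → partner hM x ∈ X := by
    intro x hx hxu
    by_contra hout
    exact hxu (cross_unique hset hu (partner_adj hM x) hx hout).1
  have hmap1 : ∀ x ∈ (X ∩ A) \ {u}, partner hM x ∈ X ∩ B := by
    rintro x ⟨⟨hxX, hxA⟩, hxu⟩
    exact ⟨hb x hxX (by simpa using hxu), bip_adj hbip hxA (partner_gadj hM x)⟩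
  have hmap2 : ∀ x ∈ X ∩ B, partner hM x ∈ (X ∩ A) \ {u} := by
    rintro x ⟨hxX, hxB⟩
    have hxu : x ≠ u := fun h => bip_not_mem hbip huA (h ▸ hxB)
    refine ⟨⟨hb x hxX hxu, bip_adj (bip_symm hbip) hxB (partner_gadj hM x)⟩, ?_⟩
    intro h
    have hh : x = v := by
      have : partner hM x = u := h
      rw [← hpu, ← this, partner_invol]
    exact hv (hh ▸ hxX)
  have c1 := ncard_le_of_partner_maps hM hmap1
  have c2 := ncard_le_of_partner_maps hM hmap2
  have humem : u ∈ X ∩ A := ⟨hu, huA⟩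
  rw [Set.ncard_diff_singleton_of_mem humem] at c1 c2
  have hpos : 0 < (X ∩ A).ncard := (Set.ncard_pos (Set.toFinite _)).mpr ⟨u, humem⟩
  omega

lemma tight_cut_trivial [Fintype V] (hbip : IsBipartition G A B)
    (hAB : A.ncard = B.ncard) (horder : 6 ≤ Fintype.card V) (hmc : IsMatchingCovered G)
    (hii : ∀ Z : Set V, Z ⊆ A → Z.Nonempty → Z.ncard < A.ncard - 1 →
      Z.ncard + 2 ≤ (setNbhd G Z).ncard)
    (X : Set V) (ht : IsTightCut G X) : IsTrivialShore X := by
  classical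
  have hA3 : 3 ≤ A.ncard := A_card_ge hbip hAB horder
  have hcardV : A.ncard + B.ncard = Fintype.card V := bip_card hbip
  obtain ⟨e₀, he₀⟩ := hmc.2.1
  obtain ⟨M₀, hM₀, -⟩ := hmc.2.2 e₀ he₀
  obtain ⟨u, v, hu, hv, hset⟩ := tight_cross ht hM₀
  -- cardinality bookkeeping
  have hXA : (X ∩ A).ncard + (Xᶜ ∩ A).ncard = A.ncard := by
    rw [← Set.ncard_union_eq (by
      exact Set.disjoint_left.mpr (fun x hx hx' => hx'.1 hx.1)) (Set.toFinite _)
      (Set.toFinite _)]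
    congr 1
    ext x
    constructor
    · rintro (h | h); exacts [h.2, h.2]
    · intro h
      by_cases hxX : x ∈ X
      · exact Or.inl ⟨hxX, h⟩
      · exact Or.inr ⟨hxX, h⟩
  have hXB : (X ∩ B).ncard + (Xᶜ ∩ B).ncard = B.ncard := by
    rw [← Set.ncard_union_eq (by
      exact Set.disjoint_left.mpr (fun x hx hx' => hx'.1 hx.1)) (Set.toFinite _)
      (Set.toFinite _)]
    congr 1
    ext x
    constructor
    · rintro (h | h); exacts [h.2, h.2]
    · intro h
      by_cases hxX : x ∈ X
      · exact Or.inl ⟨hxX, h⟩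
      · exact Or.inr ⟨hxX, h⟩
  have hXsplit : ∀ Y : Set V, (Y ∩ A) ∪ (Y ∩ B) = Y := by
    intro Y
    ext x
    constructor
    · rintro (h | h); exacts [h.1, h.1]
    · intro h
      rcases bip_mem hbip x with hA | hB
      · exact Or.inl ⟨h, hA⟩
      · exact Or.inr ⟨h, hB⟩
  have hXcard : ∀ Y : Set V, Y.ncard = (Y ∩ A).ncard + (Y ∩ B).ncard := by
    intro Y
    rw [← Set.ncard_union_eq (Set.disjoint_left.mpr
      (fun x hx hx' => bip_not_mem hbip hx.2 hx'.2)) (Set.toFinite _) (Set.toFinite _),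
      hXsplit]
  -- no-cross-edge claims
  have hcrossPM : ∀ {x y : V}, G.Adj x y → x ∈ X → y ∉ X →
      ∃ (M : G.Subgraph) (hM : M.IsPerfectMatching) (u' v' : V), u' ∈ X ∧ v' ∉ X ∧
        M.edgeSet ∩ cutEdges G X = {s(u', v')} ∧ x = u' ∧ y = v' := by
    intro x y hxy hx hy
    obtain ⟨M₁, hM₁, he₁⟩ := hmc.2.2 s(x, y) ((mem_edgeSet G).mpr hxy)
    obtain ⟨u', v', hu', hv', hset'⟩ := tight_cross ht hM₁
    obtain ⟨h1, h2⟩ := cross_unique hset' hu' (Subgraph.mem_edgeSet.mp he₁) hx hy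
    exact ⟨M₁, hM₁, u', v', hu', hv', hset', h1, h2⟩
  rcases bip_mem hbip u with huA | huB
  · -- |X∩A| = |X∩B| + 1 ; consider Z = Xᶜ ∩ A
    have hcount := tight_count hbip hM₀ hset hu hv huA
    have hnoedge : ∀ a w, a ∉ X → a ∈ A → G.Adj a w → w ∉ X := by
      intro a w haX haA hadj hwX
      have hwB : w ∈ B := bip_adj hbip haA hadj
      obtain ⟨M₁, hM₁, u', v', hu', hv', hset', h1, h2⟩ :=
        hcrossPM hadj.symm hwX haX
      have := tight_count (bip_symm hbip) hM₁ hset' hu' hv' (h1 ▸ hwB)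
      omega
    have hZA : Xᶜ ∩ A ⊆ A := fun x hx => hx.2
    have hNZ : setNbhd G (Xᶜ ∩ A) ⊆ Xᶜ ∩ B := by
      rintro w ⟨z, hzZ, hadj⟩
      exact ⟨hnoedge z w hzZ.1 hzZ.2 hadj, bip_adj hbip hzZ.2 hadj⟩
    have hNZcard : (setNbhd G (Xᶜ ∩ A)).ncard ≤ (Xᶜ ∩ B).ncard :=
      Set.ncard_le_ncard hNZ (Set.toFinite _)
    rcases (Xᶜ ∩ A).eq_empty_or_nonempty with hZe | hZne
    · -- Xᶜ ⊆ B, and |Xᶜ| = 1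
      right
      have hZc : (Xᶜ ∩ A).ncard = 0 := by rw [hZe, Set.ncard_empty]
      have : Xᶜ.ncard = 1 := by
        rw [hXcard Xᶜ]
        omega
      obtain ⟨x, hx⟩ := Set.ncard_eq_one.mp this
      exact ⟨x, hx⟩
    · by_cases hZsm : (Xᶜ ∩ A).ncard < A.ncard - 1
      · have := hii (Xᶜ ∩ A) hZA hZne hZsm
        omega
      · -- |X∩A| = 1 and X∩B = ∅
        left
        push_neg at hZsm
        have hXApos : 0 < (X ∩ A).ncard :=
          (Set.ncard_pos (Set.toFinite _)).mpr ⟨u, hu, huA⟩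
        have hXB0 : (X ∩ B).ncard = 0 := by omega
        have : X.ncard = 1 := by
          rw [hXcard X]
          omega
        obtain ⟨x, hx⟩ := Set.ncard_eq_one.mp this
        exact ⟨x, hx⟩
  · -- |X∩B| = |X∩A| + 1 ; consider Z = X ∩ A
    have hcount := tight_count (bip_symm hbip) hM₀ hset hu hv huB
    rw [Set.inter_comm X B, Set.inter_comm X A] at hcount
    rw [Set.inter_comm B X, Set.inter_comm A X] at hcount
    have hnoedge : ∀ a w, a ∈ X → a ∈ A → G.Adj a w → w ∈ X := by
      intro a w haX haA hadj
      by_contra hwX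
      obtain ⟨M₁, hM₁, u', v', hu', hv', hset', h1, h2⟩ := hcrossPM hadj haX hwX
      have := tight_count hbip hM₁ hset' hu' hv' (h1 ▸ haA)
      omega
    have hZA : X ∩ A ⊆ A := fun x hx => hx.2
    have hNZ : setNbhd G (X ∩ A) ⊆ X ∩ B := by
      rintro w ⟨z, hzZ, hadj⟩
      exact ⟨hnoedge z w hzZ.1 hzZ.2 hadj, bip_adj hbip hzZ.2 hadj⟩
    have hNZcard : (setNbhd G (X ∩ A)).ncard ≤ (X ∩ B).ncard :=
      Set.ncard_le_ncard hNZ (Set.toFinite _)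
    rcases (X ∩ A).eq_empty_or_nonempty with hZe | hZne
    · -- X ⊆ B and |X| = 1
      left
      have hZc : (X ∩ A).ncard = 0 := by rw [hZe, Set.ncard_empty]
      have : X.ncard = 1 := by
        rw [hXcard X]
        omega
      obtain ⟨x, hx⟩ := Set.ncard_eq_one.mp this
      exact ⟨x, hx⟩
    · by_cases hZsm : (X ∩ A).ncard < A.ncard - 1
      · have := hii (X ∩ A) hZA hZne hZsm
        omega
      · -- |Xᶜ| = 1
        right
        push_neg at hZsm
        have hXcApos : 0 < Xᶜ.ncard :=
          (Set.ncard_pos (Set.toFinite _)).mpr ⟨v, hv⟩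
        have : Xᶜ.ncard = 1 := by
          rw [hXcard Xᶜ] at hXcApos ⊢
          omega
        obtain ⟨x, hx⟩ := Set.ncard_eq_one.mp this
        exact ⟨x, hx⟩

end Lemmas

/-- For a connected bipartite graph `G[A,B]` of order six or more with
`|A| = |B|`, the following are equivalent: (i) `G` is a brace; (ii) `|N_G(Z)| ≥ |Z| + 2`
for every nonempty `Z ⊆ A` with `|Z| < |A| − 1`; (iii) `G − a₁ − a₂ − b₁ − b₂` has a
perfect matching for any distinct `a₁, a₂ ∈ A` and distinct `b₁, b₂ ∈ B`;
(iv) `G` is 2-extendable. -/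
theorem statement2 {V : Type*} [Fintype V] (G : SimpleGraph V) (A B : Set V)
    (hconn : G.Connected) (hbip : IsBipartition G A B) (hAB : A.ncard = B.ncard)
    (horder : 6 ≤ Fintype.card V) :
    (IsBrace G ↔
      ∀ Z : Set V, Z ⊆ A → Z.Nonempty → Z.ncard < A.ncard - 1 →
        Z.ncard + 2 ≤ (setNbhd G Z).ncard) ∧
    (IsBrace G ↔
      ∀ a₁ ∈ A, ∀ a₂ ∈ A, ∀ b₁ ∈ B, ∀ b₂ ∈ B, a₁ ≠ a₂ → b₁ ≠ b₂ →
        HasPerfectMatching (G.induce ({a₁, a₂, b₁, b₂}ᶜ : Set V))) ∧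
    (IsBrace G ↔ IsTwoExtendable G) := by
  have P1 : IsBrace G → ∀ Z : Set V, Z ⊆ A → Z.Nonempty → Z.ncard < A.ncard - 1 →
      Z.ncard + 2 ≤ (setNbhd G Z).ncard :=
    fun hbrace Z hZA hZne hZsm => brace_nbhd hbip hAB horder hbrace hZA hZne hZsm
  have P2 : (∀ Z : Set V, Z ⊆ A → Z.Nonempty → Z.ncard < A.ncard - 1 →
        Z.ncard + 2 ≤ (setNbhd G Z).ncard) →
      ∀ a₁ ∈ A, ∀ a₂ ∈ A, ∀ b₁ ∈ B, ∀ b₂ ∈ B, a₁ ≠ a₂ → b₁ ≠ b₂ →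
        HasPerfectMatching (G.induce ({a₁, a₂, b₁, b₂}ᶜ : Set V)) :=
    fun hii a₁ ha₁ a₂ ha₂ b₁ hb₁ b₂ hb₂ ha hb =>
      nbhd_to_pm4 hbip hAB horder hii ha₁ ha₂ hb₁ hb₂ ha hb
  have P3 : (∀ a₁ ∈ A, ∀ a₂ ∈ A, ∀ b₁ ∈ B, ∀ b₂ ∈ B, a₁ ≠ a₂ → b₁ ≠ b₂ →
        HasPerfectMatching (G.induce ({a₁, a₂, b₁, b₂}ᶜ : Set V))) → IsTwoExtendable G :=
    fun hiii => pm4_to_twoext hbip hAB horder hiii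
  have P4 : IsTwoExtendable G → ∀ Z : Set V, Z ⊆ A → Z.Nonempty → Z.ncard < A.ncard - 1 →
      Z.ncard + 2 ≤ (setNbhd G Z).ncard :=
    fun h2e Z hZA hZne hZsm => twoext_nbhd hconn hbip hAB horder h2e hZA hZne hZsm
  have P5 : (∀ Z : Set V, Z ⊆ A → Z.Nonempty → Z.ncard < A.ncard - 1 →
        Z.ncard + 2 ≤ (setNbhd G Z).ncard) → IsTwoExtendable G → IsBrace G := by
    intro hii h2e
    have hmc := twoext_matching_covered hconn horder h2e
    exact ⟨⟨A, B, hbip⟩, hmc, tight_cut_trivial hbip hAB horder hmc hii⟩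
  refine ⟨⟨P1, fun hii => P5 hii (P3 (P2 hii))⟩,
    ⟨fun hb => P2 (P1 hb), fun hiii => P5 (P4 (P3 hiii)) (P3 hiii)⟩,
    ⟨fun hb => P3 (P2 (P1 hb)), fun h2e => P5 (P4 h2e) h2e⟩⟩

end MinimalBraces
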